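/- Let M be a planar hypermap and l a ring of faces in M whose first element has dart x, with y = α₀(x) and x₀ the bottom of the 0-orbit of x. Assume y and x₀ are not in the same face of M. Let M₁ = B M 0 x be M with the 0-link at x broken. Then the tail of l still satisfies all four ring conditions (edge unicity, face continuity, circularity, and face simplicity) in M₁. -/

import Mathlib

open scoped Classical

/-- Dimensions 0 and 1. -/
inductive Dim : Type
  | zero : Dim
  | one : Dim
deriving DecidableEq

/-- Free maps: empty map, dart insertion, dart linking at a dimension. -/
inductive Fmap : Type
  | V : Fmap
  | I : Fmap → Nat → Fmap
  | L : Fmap → Dim → Nat → Nat → Fmap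

namespace Fmap

/-- The nil (exception) dart. -/
def nil : Nat := 0

/-- A dart exists in the map. -/
def exd : Fmap → Nat → Prop
  | V, _ => False
  | I m0 x, z => z = x ∨ exd m0 z
  | L m0 _ _ _, z => exd m0 z

/-- The (partial) k-successor α_k, with nil for undefined. -/
def A : Fmap → Dim → Nat → Nat
  | V, _, _ => nil
  | I m0 _, k, z => A m0 k z
  | L m0 k0 x y, k, z =>
      if k = k0 then (if z = x then y else A m0 k z) else A m0 k z

/-- The (partial) k-predecessor. -/
def A_1 : Fmap → Dim → Nat → Nat
  | V, _, _ => nil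
  | I m0 _, k, z => A_1 m0 k z
  | L m0 k0 x y, k, z =>
      if k = k0 then (if z = y then x else A_1 m0 k z) else A_1 m0 k z

/-- z has a k-successor. -/
def succd (m : Fmap) (k : Dim) (z : Nat) : Prop := A m k z ≠ nil

/-- z has a k-predecessor. -/
def predd (m : Fmap) (k : Dim) (z : Nat) : Prop := A_1 m k z ≠ nil

/-- Bottom dart of the open k-orbit of z. -/
def bottom : Fmap → Dim → Nat → Nat
  | V, _, _ => nil
  | I m0 x, k, z => if z = x then z else bottom m0 k z
  | L m0 k0 x y, k, z =>
      if k = k0 then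
        (if bottom m0 k z = y then bottom m0 k x else bottom m0 k z)
      else bottom m0 k z

/-- Top dart of the open k-orbit of z. -/
def top : Fmap → Dim → Nat → Nat
  | V, _, _ => nil
  | I m0 x, k, z => if z = x then z else top m0 k z
  | L m0 k0 x y, k, z =>
      if k = k0 then
        (if top m0 k z = x then top m0 k y else top m0 k z)
      else top m0 k z

/-- Closure of A: a permutation of existing darts. -/
def cA : Fmap → Dim → Nat → Nat
  | V, _, _ => nil
  | I m0 x, k, z => if z = x then z else cA m0 k z
  | L m0 k0 x y, k, z =>
      if k = k0 then
        (if z = x then y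
         else if z = top m0 k y then bottom m0 k x
         else cA m0 k z)
      else cA m0 k z

/-- Closure of A_1: the inverse permutation of cA. -/
def cA_1 : Fmap → Dim → Nat → Nat
  | V, _, _ => nil
  | I m0 x, k, z => if z = x then z else cA_1 m0 k z
  | L m0 k0 x y, k, z =>
      if k = k0 then
        (if z = y then x
         else if z = bottom m0 k x then top m0 k y
         else cA_1 m0 k z)
      else cA_1 m0 k z

/-- Precondition for inserting a dart. -/
def prec_I (m : Fmap) (x : Nat) : Prop := x ≠ nil ∧ ¬ exd m x

/-- Precondition for linking two darts at a dimension (keeping orbits open). -/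
def prec_L (m : Fmap) (k : Dim) (x y : Nat) : Prop :=
  exd m x ∧ exd m y ∧ ¬ succd m k x ∧ ¬ predd m k y ∧ cA m k x ≠ y

/-- The hypermap invariant. -/
def inv_hmap : Fmap → Prop
  | V => True
  | I m0 x => inv_hmap m0 ∧ prec_I m0 x
  | L m0 k0 x y => inv_hmap m0 ∧ prec_L m0 k0 x y

/-- The closed face map cF, corresponding to φ = α₁⁻¹ ∘ α₀⁻¹. -/
def cF (m : Fmap) (z : Nat) : Nat := cA_1 m Dim.one (cA_1 m Dim.zero z)

/-- Two darts are in the same face (existence of a cF-path). -/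
def expf (m : Fmap) (z t : Nat) : Prop := exd m z ∧ ∃ n : ℕ, (cF m)^[n] z = t

/-- Two darts are in the same edge (existence of a (cA zero)-path). -/
def expe (m : Fmap) (z t : Nat) : Prop := exd m z ∧ ∃ n : ℕ, (fun w => cA m Dim.zero w)^[n] z = t

/-- Two darts are in the same connected component. -/
def eqc : Fmap → Nat → Nat → Prop
  | V, _, _ => False
  | I m0 x, z, t => (z = x ∧ t = x) ∨ eqc m0 z t
  | L m0 _ x y, z, t =>
      eqc m0 z t ∨ (eqc m0 z x ∧ eqc m0 y t) ∨ (eqc m0 z y ∧ eqc m0 x t)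

/-- Number of darts. -/
def nd : Fmap → ℤ
  | V => 0
  | I m0 _ => nd m0 + 1
  | L m0 _ _ _ => nd m0

/-- Number of vertices. -/
def nv : Fmap → ℤ
  | V => 0
  | I m0 _ => nv m0 + 1
  | L m0 Dim.zero _ _ => nv m0
  | L m0 Dim.one _ _ => nv m0 - 1

/-- Number of edges. -/
def ne : Fmap → ℤ
  | V => 0
  | I m0 _ => ne m0 + 1
  | L m0 Dim.zero _ _ => ne m0 - 1
  | L m0 Dim.one _ _ => ne m0

/-- Number of faces. -/
noncomputable def nf : Fmap → ℤ
  | V => 0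
  | I m0 _ => nf m0 + 1
  | L m0 Dim.zero x y => if expf m0 (cA_1 m0 Dim.one x) y then nf m0 + 1 else nf m0 - 1
  | L m0 Dim.one x y => if expf m0 x (cA m0 Dim.zero y) then nf m0 + 1 else nf m0 - 1

/-- Number of connected components. -/
noncomputable def nc : Fmap → ℤ
  | V => 0
  | I m0 _ => nc m0 + 1
  | L m0 _ x y => if eqc m0 x y then nc m0 else nc m0 - 1

/-- Euler characteristic. -/
noncomputable def ec (m : Fmap) : ℤ := nv m + ne m + nf m - nd m

/-- Genus. -/
noncomputable def genus (m : Fmap) : ℤ := nc m - ec m / 2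

/-- Planarity. -/
def planar (m : Fmap) : Prop := genus m = 0

/-- Breaking the latest forward k-link of x. -/
def B : Fmap → Dim → Nat → Fmap
  | V, _, _ => V
  | I m0 x0, k, x => I (B m0 k x) x0
  | L m0 k0 x0 y0, k, x =>
      if k = k0 ∧ x = x0 then m0 else L (B m0 k x) k0 x0 y0

/-- Breaking all the 0-links of the darts of a list, first one first. -/
def Bl (m : Fmap) : List (Nat × Bool) → Fmap
  | [] => m
  | (x, _) :: l0 => Bl (B m Dim.zero x) l0

/-- The dart representing the face coded by a double-link (x, b). -/
def faceDart (m : Fmap) : Nat × Bool → Nat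
  | (x, b) => if b then A m Dim.zero x else bottom m Dim.zero x

/-- The edge of x is distinct from the edges of the darts of a list. -/
def distinct_edge_list (m : Fmap) (x : Nat) : List (Nat × Bool) → Prop
  | [] => True
  | (x', _) :: l0 => distinct_edge_list m x l0 ∧ ¬ expe m x x'

/-- Ring condition (0): unicity of edges, and each dart 0-linked. -/
def pre_ring0 (m : Fmap) : List (Nat × Bool) → Prop
  | [] => True
  | (x, _) :: l0 => pre_ring0 m l0 ∧ distinct_edge_list m x l0 ∧ succd m Dim.zero x

/-- Adjacency of the faces coded by two double-links. -/
def adjacent_faces (m : Fmap) : Nat × Bool → Nat × Bool → Prop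
  | (x, b), (x', b') =>
      let y := A m Dim.zero x
      let y' := A m Dim.zero x'
      let x0 := bottom m Dim.zero x
      let x'0 := bottom m Dim.zero x'
      if b then (if b' then expf m x0 y' else expf m x0 x'0)
      else (if b' then expf m y y' else expf m y x'0)

/-- Ring condition (1): continuity. -/
def pre_ring1 (m : Fmap) : List (Nat × Bool) → Prop
  | [] => True
  | xb :: l0 =>
      pre_ring1 m l0 ∧
      match l0 with
      | [] => True
      | xb' :: _ => adjacent_faces m xb xb'

/-- Last element of a list of double-links (with default). -/
def lastd : List (Nat × Bool) → Nat × Bool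
  | [] => (nil, true)
  | [a] => a
  | _ :: a :: l0 => lastd (a :: l0)

/-- Ring condition (2): circularity. -/
def pre_ring2 (m : Fmap) : List (Nat × Bool) → Prop
  | [] => True
  | (x, b) :: l0 =>
      match l0 with
      | [] => expf m (A m Dim.zero x) (bottom m Dim.zero x)
      | _ :: _ => adjacent_faces m (lastd l0) (x, b)

/-- The faces coded by two double-links are distinct. -/
def distinct_faces (m : Fmap) (xb xb' : Nat × Bool) : Prop :=
  ¬ expf m (faceDart m xb) (faceDart m xb')

/-- The face of xb is distinct from the faces of a list. -/
def distinct_face_list (m : Fmap) (xb : Nat × Bool) : List (Nat × Bool) → Prop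
  | [] => True
  | xb' :: l0 => distinct_face_list m xb l0 ∧ distinct_faces m xb xb'

/-- Ring condition (3): simplicity. -/
def pre_ring3 (m : Fmap) : List (Nat × Bool) → Prop
  | [] => True
  | xb :: l0 => pre_ring3 m l0 ∧ distinct_face_list m xb l0

/-- A ring of faces. -/
def ring (m : Fmap) (l : List (Nat × Bool)) : Prop :=
  l ≠ [] ∧ pre_ring0 m l ∧ pre_ring1 m l ∧ pre_ring2 m l ∧ pre_ring3 m l

end Fmap

open Fmap
namespace Fmap

lemma exd_not_nil {m : Fmap} (h : inv_hmap m) : ∀ z, exd m z → z ≠ nil := by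
  induction m with
  | V => intro z hz; cases hz
  | I m0 d ih =>
      intro z hz
      rcases hz with rfl | hz
      · exact h.2.1
      · exact ih h.1 z hz
  | L m0 k0 x0 y0 ih => intro z hz; exact ih h.1 z hz

lemma exd_finite (m : Fmap) : ∃ s : Finset ℕ, ∀ z, exd m z → z ∈ s := by
  induction m with
  | V => exact ⟨∅, fun z hz => hz.elim⟩
  | I m0 d ih =>
      obtain ⟨s, hs⟩ := ih
      exact ⟨insert d s, fun z hz => by
        rcases hz with rfl | hz
        · exact Finset.mem_insert_self _ _
        · exact Finset.mem_insert_of_mem (hs z hz)⟩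
  | L m0 k0 x0 y0 ih => exact ih

lemma succd_exd {m : Fmap} (h : inv_hmap m) : ∀ k z, succd m k z → exd m z := by
  induction m with
  | V => intro k z hs; exact absurd rfl hs
  | I m0 d ih => intro k z hs; exact Or.inr (ih h.1 k z hs)
  | L m0 k0 x0 y0 ih =>
      intro k z hs
      simp only [succd, A] at hs
      by_cases hk : k = k0
      · subst hk
        rw [if_pos rfl] at hs
        by_cases hz : z = x0
        · subst hz; exact h.2.1
        · rw [if_neg hz] at hs; exact ih h.1 k z hs
      · rw [if_neg hk] at hs; exact ih h.1 k z hs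

lemma predd_exd {m : Fmap} (h : inv_hmap m) : ∀ k z, predd m k z → exd m z := by
  induction m with
  | V => intro k z hs; exact absurd rfl hs
  | I m0 d ih => intro k z hs; exact Or.inr (ih h.1 k z hs)
  | L m0 k0 x0 y0 ih =>
      intro k z hs
      simp only [predd, A_1] at hs
      by_cases hk : k = k0
      · subst hk
        rw [if_pos rfl] at hs
        by_cases hz : z = y0
        · subst hz; exact h.2.2.1
        · rw [if_neg hz] at hs; exact ih h.1 k z hs
      · rw [if_neg hk] at hs; exact ih h.1 k z hs

lemma exd_A {m : Fmap} (h : inv_hmap m) : ∀ k z, succd m k z → exd m (A m k z) := by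
  induction m with
  | V => intro k z hs; exact absurd rfl hs
  | I m0 d ih => intro k z hs; exact Or.inr (ih h.1 k z hs)
  | L m0 k0 x0 y0 ih =>
      intro k z hs
      simp only [succd, A] at hs ⊢
      by_cases hk : k = k0
      · subst hk
        rw [if_pos rfl] at hs ⊢
        by_cases hz : z = x0
        · rw [if_pos hz]; exact h.2.2.1
        · rw [if_neg hz] at hs ⊢; exact ih h.1 k z hs
      · rw [if_neg hk] at hs ⊢; exact ih h.1 k z hs

lemma exd_A_1 {m : Fmap} (h : inv_hmap m) : ∀ k z, predd m k z → exd m (A_1 m k z) := by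
  induction m with
  | V => intro k z hs; exact absurd rfl hs
  | I m0 d ih => intro k z hs; exact Or.inr (ih h.1 k z hs)
  | L m0 k0 x0 y0 ih =>
      intro k z hs
      simp only [predd, A_1] at hs ⊢
      by_cases hk : k = k0
      · subst hk
        rw [if_pos rfl] at hs ⊢
        by_cases hz : z = y0
        · rw [if_pos hz]; exact h.2.1
        · rw [if_neg hz] at hs ⊢; exact ih h.1 k z hs
      · rw [if_neg hk] at hs ⊢; exact ih h.1 k z hs

lemma exd_bottom {m : Fmap} (h : inv_hmap m) : ∀ k z, exd m z → exd m (bottom m k z) := by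
  induction m with
  | V => intro _ z hz; cases hz
  | I m0 d ih =>
      intro k z hz
      simp only [bottom]
      by_cases hzd : z = d
      · rw [if_pos hzd]; exact Or.inl hzd
      · rw [if_neg hzd]
        rcases hz with rfl | hz
        · exact absurd rfl hzd
        · exact Or.inr (ih h.1 k z hz)
  | L m0 k0 x0 y0 ih =>
      intro k z hz
      simp only [bottom]
      by_cases hk : k = k0
      · rw [if_pos hk]
        by_cases hb : bottom m0 k z = y0
        · rw [if_pos hb]; exact ih h.1 k x0 h.2.1
        · rw [if_neg hb]; exact ih h.1 k z hz
      · rw [if_neg hk]; exact ih h.1 k z hz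

lemma exd_top {m : Fmap} (h : inv_hmap m) : ∀ k z, exd m z → exd m (top m k z) := by
  induction m with
  | V => intro _ z hz; cases hz
  | I m0 d ih =>
      intro k z hz
      simp only [top]
      by_cases hzd : z = d
      · rw [if_pos hzd]; exact Or.inl hzd
      · rw [if_neg hzd]
        rcases hz with rfl | hz
        · exact absurd rfl hzd
        · exact Or.inr (ih h.1 k z hz)
  | L m0 k0 x0 y0 ih =>
      intro k z hz
      simp only [top]
      by_cases hk : k = k0
      · rw [if_pos hk]
        by_cases hb : top m0 k z = x0
        · rw [if_pos hb]; exact ih h.1 k y0 h.2.2.1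
        · rw [if_neg hb]; exact ih h.1 k z hz
      · rw [if_neg hk]; exact ih h.1 k z hz

end Fmap
namespace Fmap

lemma A_not_exd {m : Fmap} (h : inv_hmap m) : ∀ k z, ¬ exd m z → A m k z = nil := by
  induction m with
  | V => intro k z _; rfl
  | I m0 d ih =>
      intro k z hz
      exact ih h.1 k z (fun hz0 => hz (Or.inr hz0))
  | L m0 k0 x0 y0 ih =>
      intro k z hz
      have hzx : z ≠ x0 := fun e => hz (e ▸ h.2.1)
      simp only [A]
      by_cases hk : k = k0
      · rw [if_pos hk, if_neg hzx]; exact ih h.1 k z hz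
      · rw [if_neg hk]; exact ih h.1 k z hz

lemma A_1_not_exd {m : Fmap} (h : inv_hmap m) : ∀ k z, ¬ exd m z → A_1 m k z = nil := by
  induction m with
  | V => intro k z _; rfl
  | I m0 d ih =>
      intro k z hz
      exact ih h.1 k z (fun hz0 => hz (Or.inr hz0))
  | L m0 k0 x0 y0 ih =>
      intro k z hz
      have hzy : z ≠ y0 := fun e => hz (e ▸ h.2.2.1)
      simp only [A_1]
      by_cases hk : k = k0
      · rw [if_pos hk, if_neg hzy]; exact ih h.1 k z hz
      · rw [if_neg hk]; exact ih h.1 k z hz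

lemma orbit_pack {m : Fmap} (h : inv_hmap m) : ∀ k,
    (∀ z, exd m z → A m k (top m k z) = nil) ∧
    (∀ z, exd m z → A_1 m k (bottom m k z) = nil) ∧
    (∀ z, exd m z → A m k z = nil → top m k z = z) ∧
    (∀ z, exd m z → A_1 m k z = nil → bottom m k z = z) ∧
    (∀ z t, exd m z → exd m t → (bottom m k z = bottom m k t ↔ top m k z = top m k t)) ∧
    (∀ z, exd m z → cA m k z = if A m k z = nil then bottom m k z else A m k z) ∧
    (∀ z, exd m z → cA_1 m k z = if A_1 m k z = nil then top m k z else A_1 m k z) := by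
  induction m with
  | V => intro k; exact ⟨fun z hz => hz.elim, fun z hz => hz.elim, fun z hz => hz.elim,
      fun z hz => hz.elim, fun z t hz => hz.elim, fun z hz => hz.elim, fun z hz => hz.elim⟩
  | I m0 d ih =>
      intro k
      obtain ⟨f0, g0, h0, i0, c0, d0, e0⟩ := ih h.1 k
      have hnd : ¬ exd m0 d := h.2.2
      constructor
      · intro z hz
        simp only [top, A]
        by_cases hzd : z = d
        · rw [if_pos hzd, hzd]; exact A_not_exd h.1 k d hnd
        · rw [if_neg hzd]
          rcases hz with rfl | hz
          · exact absurd rfl hzd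
          · exact f0 z hz
      constructor
      · intro z hz
        simp only [bottom, A_1]
        by_cases hzd : z = d
        · rw [if_pos hzd, hzd]; exact A_1_not_exd h.1 k d hnd
        · rw [if_neg hzd]
          rcases hz with rfl | hz
          · exact absurd rfl hzd
          · exact g0 z hz
      constructor
      · intro z hz hA
        simp only [A] at hA
        simp only [top]
        by_cases hzd : z = d
        · rw [if_pos hzd]
        · rw [if_neg hzd]
          rcases hz with rfl | hz
          · exact absurd rfl hzd
          · exact h0 z hz hA
      constructor
      · intro z hz hA
        simp only [A_1] at hA
        simp only [bottom]
        by_cases hzd : z = d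
        · rw [if_pos hzd]
        · rw [if_neg hzd]
          rcases hz with rfl | hz
          · exact absurd rfl hzd
          · exact i0 z hz hA
      constructor
      · intro z t hz ht
        simp only [bottom, top]
        by_cases hzd : z = d <;> by_cases htd : t = d
        · simp [hzd, htd]
        · rw [if_pos hzd, if_neg htd, if_pos hzd, if_neg htd]
          have ht' : exd m0 t := ht.resolve_left htd
          constructor
          · intro e; exact absurd (hzd ▸ e.symm ▸ exd_bottom h.1 k t ht') (hzd ▸ hnd)
          · intro e; exact absurd (hzd ▸ e.symm ▸ exd_top h.1 k t ht') (hzd ▸ hnd)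
        · rw [if_neg hzd, if_pos htd, if_neg hzd, if_pos htd]
          have hz' : exd m0 z := hz.resolve_left hzd
          constructor
          · intro e; exact absurd (htd ▸ e ▸ exd_bottom h.1 k z hz') (htd ▸ hnd)
          · intro e; exact absurd (htd ▸ e ▸ exd_top h.1 k z hz') (htd ▸ hnd)
        · rw [if_neg hzd, if_neg htd, if_neg hzd, if_neg htd]
          exact c0 z t (hz.resolve_left hzd) (ht.resolve_left htd)
      constructor
      · intro z hz
        simp only [cA, A, bottom]
        by_cases hzd : z = d
        · simp [hzd, A_not_exd h.1 k d hnd]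
        · rw [if_neg hzd, if_neg hzd]
          exact d0 z (hz.resolve_left hzd)
      · intro z hz
        simp only [cA_1, A_1, top]
        by_cases hzd : z = d
        · simp [hzd, A_1_not_exd h.1 k d hnd]
        · rw [if_neg hzd, if_neg hzd]
          exact e0 z (hz.resolve_left hzd)
  | L m0 k0 x0 y0 ih =>
      intro k
      obtain ⟨f0, g0, h0, i0, c0, d0, e0⟩ := ih h.1 k
      have ex0 : exd m0 x0 := h.2.1
      have ey0 : exd m0 y0 := h.2.2.1
      by_cases hk : k = k0
      case neg =>
        -- everything passes through
        simp only [top, bottom, A, A_1, cA, cA_1, if_neg hk]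
        exact ⟨f0, g0, fun z hz => h0 z hz, fun z hz => i0 z hz, c0, d0, e0⟩
      case pos =>
        subst hk
        have hns : ¬ succd m0 k x0 := h.2.2.2.1
        have hnp : ¬ predd m0 k y0 := h.2.2.2.2.1
        have hne : cA m0 k x0 ≠ y0 := h.2.2.2.2.2
        have hAx0 : A m0 k x0 = nil := not_not.mp (fun hs => hns hs)
        have hA1y0 : A_1 m0 k y0 = nil := not_not.mp (fun hs => hnp hs)
        have htx0 : top m0 k x0 = x0 := h0 x0 ex0 hAx0
        have hby0 : bottom m0 k y0 = y0 := i0 y0 ey0 hA1y0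
        have hbx0y0 : bottom m0 k x0 ≠ y0 := by
          intro e; apply hne; rw [d0 x0 ex0, if_pos hAx0, e]
        have hty0x0 : top m0 k y0 ≠ x0 := by
          intro e
          apply hbx0y0
          have : bottom m0 k x0 = bottom m0 k y0 :=
            (c0 x0 y0 ex0 ey0).mpr (by rw [e, htx0])
          rw [hby0] at this; exact this
        have hy0nil : y0 ≠ nil := exd_not_nil h.1 y0 ey0
        have hx0nil : x0 ≠ nil := exd_not_nil h.1 x0 ex0
        -- abbreviations for the L-level functions
        have hA : ∀ z, A (L m0 k x0 y0) k z = if z = x0 then y0 else A m0 k z := by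
          intro z; simp [A]
        have hA1 : ∀ z, A_1 (L m0 k x0 y0) k z = if z = y0 then x0 else A_1 m0 k z := by
          intro z; simp [A_1]
        have hT : ∀ z, top (L m0 k x0 y0) k z =
            if top m0 k z = x0 then top m0 k y0 else top m0 k z := by
          intro z; simp [top]
        have hB : ∀ z, bottom (L m0 k x0 y0) k z =
            if bottom m0 k z = y0 then bottom m0 k x0 else bottom m0 k z := by
          intro z; simp [bottom]
        have hCA : ∀ z, cA (L m0 k x0 y0) k z =
            if z = x0 then y0 else if z = top m0 k y0 then bottom m0 k x0 else cA m0 k z := by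
          intro z; simp [cA]
        have hCA1 : ∀ z, cA_1 (L m0 k x0 y0) k z =
            if z = y0 then x0 else if z = bottom m0 k x0 then top m0 k y0 else cA_1 m0 k z := by
          intro z; simp [cA_1]
        constructor
        · -- (f) A (top) = nil
          intro z hz
          rw [hT, hA]
          by_cases hc : top m0 k z = x0
          · rw [if_pos hc, if_neg hty0x0]; exact f0 y0 ey0
          · rw [if_neg hc, if_neg hc]; exact f0 z hz
        constructor
        · -- (g) A_1 (bottom) = nil
          intro z hz
          rw [hB, hA1]
          by_cases hc : bottom m0 k z = y0
          · rw [if_pos hc, if_neg hbx0y0]; exact g0 x0 ex0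
          · rw [if_neg hc, if_neg hc]; exact g0 z hz
        constructor
        · -- (h) no succ → top = z
          intro z hz hAz
          rw [hA] at hAz
          have hzx : z ≠ x0 := by
            intro e; rw [if_pos e] at hAz; exact hy0nil hAz
          rw [if_neg hzx] at hAz
          have htz : top m0 k z = z := h0 z hz hAz
          rw [hT, htz, if_neg hzx]
        constructor
        · -- (i) no pred → bottom = z
          intro z hz hAz
          rw [hA1] at hAz
          have hzy : z ≠ y0 := by
            intro e; rw [if_pos e] at hAz; exact hx0nil hAz
          rw [if_neg hzy] at hAz
          have hbz : bottom m0 k z = z := i0 z hz hAz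
          rw [hB, hbz, if_neg hzy]
        constructor
        · -- (c) bottom iff top
          intro z t hz ht
          rw [hB, hB, hT, hT]
          by_cases hbz : bottom m0 k z = y0 <;> by_cases hbt : bottom m0 k t = y0
          · -- both in orbit of y0
            have h1 : top m0 k z = top m0 k y0 :=
              (c0 z y0 hz ey0).mp (by rw [hbz, hby0])
            have h2 : top m0 k t = top m0 k y0 :=
              (c0 t y0 ht ey0).mp (by rw [hbt, hby0])
            have hcz : top m0 k z ≠ x0 := fun e => hty0x0 (h1 ▸ e)
            have hct : top m0 k t ≠ x0 := fun e => hty0x0 (h2 ▸ e)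
            rw [if_pos hbz, if_pos hbt, if_neg hcz, if_neg hct, h1, h2]
            simp
          · -- z in orbit y0, t not
            have h1 : top m0 k z = top m0 k y0 :=
              (c0 z y0 hz ey0).mp (by rw [hbz, hby0])
            have hcz : top m0 k z ≠ x0 := fun e => hty0x0 (h1 ▸ e)
            rw [if_pos hbz, if_neg hbt, if_neg hcz]
            constructor
            · intro e
              have h2 : top m0 k t = top m0 k x0 := (c0 t x0 ht ex0).mp e.symm
              rw [if_pos (h2.trans htx0), h1]
            · intro e
              by_cases hct : top m0 k t = x0
              · have : bottom m0 k t = bottom m0 k x0 := (c0 t x0 ht ex0).mpr (by rw [hct, htx0])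
                rw [this]
              · rw [if_neg hct] at e
                exact absurd ((c0 t y0 ht ey0).mpr (e.symm.trans h1)) (by rw [hby0]; exact hbt)
          · -- t in orbit y0, z not
            have h2 : top m0 k t = top m0 k y0 :=
              (c0 t y0 ht ey0).mp (by rw [hbt, hby0])
            have hct : top m0 k t ≠ x0 := fun e => hty0x0 (h2 ▸ e)
            rw [if_neg hbz, if_pos hbt, if_neg hct]
            constructor
            · intro e
              have h1 : top m0 k z = top m0 k x0 := (c0 z x0 hz ex0).mp e
              rw [if_pos (h1.trans htx0), h2]
            · intro e
              by_cases hcz : top m0 k z = x0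
              · have : bottom m0 k z = bottom m0 k x0 := (c0 z x0 hz ex0).mpr (by rw [hcz, htx0])
                rw [this]
              · rw [if_neg hcz] at e
                exact absurd ((c0 z y0 hz ey0).mpr (e.trans h2)) (by rw [hby0]; exact hbz)
          · -- neither
            rw [if_neg hbz, if_neg hbt]
            constructor
            · intro e
              have := (c0 z t hz ht).mp e
              rw [this]
            · intro e
              by_cases hcz : top m0 k z = x0 <;> by_cases hct : top m0 k t = x0
              · exact (c0 z t hz ht).mpr (by rw [hcz, hct])
              · rw [if_pos hcz, if_neg hct] at e
                exact absurd ((c0 t y0 ht ey0).mpr e.symm) (by rw [hby0]; exact hbt)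
              · rw [if_neg hcz, if_pos hct] at e
                exact absurd ((c0 z y0 hz ey0).mpr e) (by rw [hby0]; exact hbz)
              · rw [if_neg hcz, if_neg hct] at e
                exact (c0 z t hz ht).mpr e
        constructor
        · -- (d) cA_eq
          intro z hz
          have hz' : exd m0 z := hz
          rw [hCA, hA, hB]
          by_cases hzx : z = x0
          · simp [hzx, hy0nil]
          · by_cases hzt : z = top m0 k y0
            · have hbz : bottom m0 k z = y0 := by
                rw [hzt]
                have : bottom m0 k (top m0 k y0) = bottom m0 k y0 := by
                  apply (c0 _ _ (exd_top h.1 k y0 ey0) ey0).mpr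
                  exact h0 _ (exd_top h.1 k y0 ey0) (f0 y0 ey0)
                rw [this, hby0]
              have hAz : A m0 k z = nil := by rw [hzt]; exact f0 y0 ey0
              simp only [if_neg hzx]
              rw [if_pos hzt, hAz]
              simp [hbz]
            · by_cases hAz : A m0 k z = nil
              · have hbz : bottom m0 k z ≠ y0 := by
                  intro e
                  apply hzt
                  have h1 : top m0 k z = top m0 k y0 :=
                    (c0 z y0 hz' ey0).mp (by rw [e, hby0])
                  rw [← h1, h0 z hz' hAz]
                simp [hzx, hzt, hAz, hbz, d0 z hz']
              · simp [hzx, hzt, hAz, d0 z hz']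
        · -- (e) cA_1_eq
          intro z hz
          have hz' : exd m0 z := hz
          rw [hCA1, hA1, hT]
          by_cases hzy : z = y0
          · simp [hzy, hx0nil]
          · by_cases hzb : z = bottom m0 k x0
            · have htz : top m0 k z = x0 := by
                rw [hzb]
                have : top m0 k (bottom m0 k x0) = top m0 k x0 := by
                  apply (c0 _ _ (exd_bottom h.1 k x0 ex0) ex0).mp
                  exact i0 _ (exd_bottom h.1 k x0 ex0) (g0 x0 ex0)
                rw [this, htx0]
              have hAz : A_1 m0 k z = nil := by rw [hzb]; exact g0 x0 ex0
              simp only [if_neg hzy]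
              rw [if_pos hzb, hAz]
              simp [htz]
            · by_cases hAz : A_1 m0 k z = nil
              · have htz : top m0 k z ≠ x0 := by
                  intro e
                  apply hzb
                  have h1 : bottom m0 k z = bottom m0 k x0 :=
                    (c0 z x0 hz' ex0).mpr (by rw [e, htx0])
                  rw [← h1, i0 z hz' hAz]
                simp [hzy, hzb, hAz, htz, e0 z hz']
              · simp [hzy, hzb, hAz, e0 z hz']

end Fmap
namespace Fmap

variable {m : Fmap}

lemma A_top (h : inv_hmap m) (k : Dim) {z : Nat} (hz : exd m z) : A m k (top m k z) = nil :=
  ((orbit_pack h k).1) z hz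

lemma A_1_bottom (h : inv_hmap m) (k : Dim) {z : Nat} (hz : exd m z) :
    A_1 m k (bottom m k z) = nil := ((orbit_pack h k).2.1) z hz

lemma top_nosucc (h : inv_hmap m) {k : Dim} {z : Nat} (hz : exd m z) (hA : A m k z = nil) :
    top m k z = z := ((orbit_pack h k).2.2.1) z hz hA

lemma bottom_nopred (h : inv_hmap m) {k : Dim} {z : Nat} (hz : exd m z) (hA : A_1 m k z = nil) :
    bottom m k z = z := ((orbit_pack h k).2.2.2.1) z hz hA

lemma bt_iff (h : inv_hmap m) {k : Dim} {z t : Nat} (hz : exd m z) (ht : exd m t) :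
    bottom m k z = bottom m k t ↔ top m k z = top m k t :=
  ((orbit_pack h k).2.2.2.2.1) z t hz ht

lemma cA_eq (h : inv_hmap m) {k : Dim} {z : Nat} (hz : exd m z) :
    cA m k z = if A m k z = nil then bottom m k z else A m k z :=
  ((orbit_pack h k).2.2.2.2.2.1) z hz

lemma cA_1_eq (h : inv_hmap m) {k : Dim} {z : Nat} (hz : exd m z) :
    cA_1 m k z = if A_1 m k z = nil then top m k z else A_1 m k z :=
  ((orbit_pack h k).2.2.2.2.2.2) z hz

lemma top_top (h : inv_hmap m) (k : Dim) {z : Nat} (hz : exd m z) :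
    top m k (top m k z) = top m k z :=
  top_nosucc h (exd_top h k z hz) (A_top h k hz)

lemma bottom_bottom (h : inv_hmap m) (k : Dim) {z : Nat} (hz : exd m z) :
    bottom m k (bottom m k z) = bottom m k z :=
  bottom_nopred h (exd_bottom h k z hz) (A_1_bottom h k hz)

lemma bottom_top (h : inv_hmap m) (k : Dim) {z : Nat} (hz : exd m z) :
    bottom m k (top m k z) = bottom m k z :=
  (bt_iff h (exd_top h k z hz) hz).mpr (top_top h k hz)

lemma top_bottom (h : inv_hmap m) (k : Dim) {z : Nat} (hz : exd m z) :
    top m k (bottom m k z) = top m k z :=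
  (bt_iff h (exd_bottom h k z hz) hz).mp (bottom_bottom h k hz)

lemma cA_top (h : inv_hmap m) (k : Dim) {z : Nat} (hz : exd m z) :
    cA m k (top m k z) = bottom m k z := by
  rw [cA_eq h (exd_top h k z hz), if_pos (A_top h k hz), bottom_top h k hz]

lemma cA_1_bottom (h : inv_hmap m) (k : Dim) {z : Nat} (hz : exd m z) :
    cA_1 m k (bottom m k z) = top m k z := by
  rw [cA_1_eq h (exd_bottom h k z hz), if_pos (A_1_bottom h k hz), top_bottom h k hz]

lemma exd_cA (h : inv_hmap m) (k : Dim) {z : Nat} (hz : exd m z) : exd m (cA m k z) := by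
  rw [cA_eq h hz]
  by_cases hA : A m k z = nil
  · rw [if_pos hA]; exact exd_bottom h k z hz
  · rw [if_neg hA]; exact exd_A h k z hA

lemma exd_cA_1 (h : inv_hmap m) (k : Dim) {z : Nat} (hz : exd m z) : exd m (cA_1 m k z) := by
  rw [cA_1_eq h hz]
  by_cases hA : A_1 m k z = nil
  · rw [if_pos hA]; exact exd_top h k z hz
  · rw [if_neg hA]; exact exd_A_1 h k z hA

lemma A_1_A (h : inv_hmap m) : ∀ k z, succd m k z → A_1 m k (A m k z) = z := by
  induction m with
  | V => intro k z hs; exact absurd rfl hs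
  | I m0 d ih => intro k z hs; exact ih h.1 k z hs
  | L m0 k0 x0 y0 ih =>
      intro k z hs
      simp only [succd, A, A_1] at hs ⊢
      by_cases hk : k = k0
      · subst hk
        rw [if_pos rfl] at hs ⊢
        simp only [eq_self, if_true]
        by_cases hz : z = x0
        · rw [if_pos hz, if_pos rfl, hz]
        · rw [if_neg hz] at hs ⊢
          have hne : A m0 k z ≠ y0 := by
            intro e
            apply h.2.2.2.2.1
            show A_1 m0 k y0 ≠ nil
            rw [← e, ih h.1 k z hs]
            exact exd_not_nil h.1 z (succd_exd h.1 k z hs)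
          rw [if_neg hne]
          exact ih h.1 k z hs
      · rw [if_neg hk] at hs ⊢
        rw [if_neg hk]
        exact ih h.1 k z hs

lemma A_A_1 (h : inv_hmap m) : ∀ k z, predd m k z → A m k (A_1 m k z) = z := by
  induction m with
  | V => intro k z hs; exact absurd rfl hs
  | I m0 d ih => intro k z hs; exact ih h.1 k z hs
  | L m0 k0 x0 y0 ih =>
      intro k z hs
      simp only [predd, A, A_1] at hs ⊢
      by_cases hk : k = k0
      · subst hk
        rw [if_pos rfl] at hs ⊢
        simp only [eq_self, if_true]
        by_cases hz : z = y0
        · rw [if_pos hz, if_pos rfl, hz]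
        · rw [if_neg hz] at hs ⊢
          have hne : A_1 m0 k z ≠ x0 := by
            intro e
            apply h.2.2.2.1
            show A m0 k x0 ≠ nil
            rw [← e, ih h.1 k z hs]
            exact exd_not_nil h.1 z (predd_exd h.1 k z hs)
          rw [if_neg hne]
          exact ih h.1 k z hs
      · rw [if_neg hk] at hs ⊢
        rw [if_neg hk]
        exact ih h.1 k z hs

lemma cA_1_cA (h : inv_hmap m) {k : Dim} {z : Nat} (hz : exd m z) :
    cA_1 m k (cA m k z) = z := by
  rw [cA_eq h hz]
  by_cases hA : A m k z = nil
  · rw [if_pos hA, cA_1_bottom h k hz, top_nosucc h hz hA]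
  · rw [if_neg hA, cA_1_eq h (exd_A h k z hA)]
    have : A_1 m k (A m k z) = z := A_1_A h k z hA
    rw [this, if_neg (exd_not_nil h z hz)]

lemma cA_cA_1 (h : inv_hmap m) {k : Dim} {z : Nat} (hz : exd m z) :
    cA m k (cA_1 m k z) = z := by
  rw [cA_1_eq h hz]
  by_cases hA : A_1 m k z = nil
  · rw [if_pos hA, cA_top h k hz, bottom_nopred h hz hA]
  · rw [if_neg hA, cA_eq h (exd_A_1 h k z hA)]
    have : A m k (A_1 m k z) = z := A_A_1 h k z hA
    rw [this, if_neg (exd_not_nil h z hz)]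

lemma bottom_A (h : inv_hmap m) : ∀ k z, succd m k z → bottom m k (A m k z) = bottom m k z := by
  induction m with
  | V => intro k z hs; exact absurd rfl hs
  | I m0 d ih => intro k z hs; simp only [A, bottom]
                 have hz0 : exd m0 z := succd_exd h.1 k z hs
                 have hA0 : exd m0 (A m0 k z) := exd_A h.1 k z hs
                 simp only [if_neg (fun e : A m0 k z = d => h.2.2 (e ▸ hA0)), if_neg (fun e : z = d => h.2.2 (e ▸ hz0))]
                 exact (if_neg (fun e : A m0 k z = d => h.2.2 (e ▸ hA0))).trans (ih h.1 k z hs)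
  | L m0 k0 x0 y0 ih =>
      intro k z hs
      simp only [succd, A, bottom] at hs ⊢
      by_cases hk : k = k0
      · subst hk
        rw [if_pos rfl] at hs ⊢
        simp only [eq_self, if_true]
        have hby0 : bottom m0 k y0 = y0 :=
          bottom_nopred h.1 h.2.2.1 (not_not.mp h.2.2.2.2.1)
        by_cases hz : z = x0
        · rw [if_pos hz, hby0, if_pos rfl, hz]
          have : bottom m0 k x0 ≠ y0 := by
            intro e
            apply h.2.2.2.2.2
            rw [cA_eq h.1 h.2.1, if_pos (not_not.mp h.2.2.2.1), e]
          rw [if_neg this]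
        · rw [if_neg hz] at hs ⊢
          rw [ih h.1 k z hs]
      · rw [if_neg hk] at hs ⊢
        rw [if_neg hk, if_neg hk]
        exact ih h.1 k z hs

lemma bottom_cA (h : inv_hmap m) (k : Dim) {z : Nat} (hz : exd m z) :
    bottom m k (cA m k z) = bottom m k z := by
  rw [cA_eq h hz]
  by_cases hA : A m k z = nil
  · rw [if_pos hA]; exact bottom_bottom h k hz
  · rw [if_neg hA]; exact bottom_A h k z hA

end Fmap
namespace Fmap

lemma iter_pres {f : ℕ → ℕ} {P : ℕ → Prop} (hf : ∀ w, P w → P (f w)) :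
    ∀ n z, P z → P (f^[n] z) := by
  intro n
  induction n with
  | zero => intro z hz; exact hz
  | succ n ih =>
      intro z hz
      rw [Function.iterate_succ_apply']
      exact hf _ (ih z hz)

lemma iter_eq_of_agree_upto {f g : ℕ → ℕ} {b : ℕ} :
    ∀ {n : ℕ}, (∀ i, i < n → g (f^[i] b) = f (f^[i] b)) → g^[n] b = f^[n] b := by
  intro n
  induction n with
  | zero => intro _; rfl
  | succ n ih =>
      intro hag
      rw [Function.iterate_succ_apply', Function.iterate_succ_apply',
          ih (fun i hi => hag i (by omega)), hag n (by omega)]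

lemma reach_min_no_return {f : ℕ → ℕ} {b z : ℕ} {n : ℕ} (hn : f^[n] b = z)
    (hmin : ∀ i, i < n → f^[i] b ≠ z) {i : ℕ} (hi : i < n)
    (hret : f (f^[i] b) = b) : False := by
  have h1 : f^[i+1] b = b := by rw [Function.iterate_succ_apply', hret]
  have h2 : f^[n] b = f^[n - (i+1)] b := by
    conv_lhs => rw [show n = (n - (i+1)) + (i+1) by omega]
    rw [Function.iterate_add_apply, h1]
  exact hmin (n - (i+1)) (by omega) (h2.symm.trans hn)

lemma exd_iter_cA {m : Fmap} (h : inv_hmap m) (k : Dim) :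
    ∀ n {z}, exd m z → exd m ((cA m k)^[n] z) :=
  fun n z hz => iter_pres (fun w hw => exd_cA h k hw) n z hz

lemma bottom_iter_cA {m : Fmap} (h : inv_hmap m) (k : Dim) :
    ∀ n {z}, exd m z → bottom m k ((cA m k)^[n] z) = bottom m k z := by
  intro n
  induction n with
  | zero => intro z hz; rfl
  | succ n ih =>
      intro z hz
      rw [Function.iterate_succ_apply', bottom_cA h k (exd_iter_cA h k n hz), ih hz]

lemma bottom_reach {m : Fmap} (h : inv_hmap m) :
    ∀ k z, exd m z → ∃ n, (cA m k)^[n] (bottom m k z) = z := by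
  induction m with
  | V => intro k z hz; cases hz
  | I m0 d ih =>
      intro k z hz
      by_cases hzd : z = d
      · refine ⟨0, ?_⟩
        simp only [bottom, if_pos hzd, Function.iterate_zero_apply]
      · have hz0 : exd m0 z := hz.resolve_left hzd
        obtain ⟨n, hn⟩ := ih h.1 k z hz0
        refine ⟨n, ?_⟩
        have hb0 : exd m0 (bottom m0 k z) := exd_bottom h.1 k z hz0
        have hbI : bottom (I m0 d) k z = bottom m0 k z := by
          simp only [bottom, if_neg hzd]
        rw [hbI]
        have hag : ∀ i, i < n → cA (I m0 d) k ((cA m0 k)^[i] (bottom m0 k z))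
            = cA m0 k ((cA m0 k)^[i] (bottom m0 k z)) := by
          intro i hi
          have hw : exd m0 ((cA m0 k)^[i] (bottom m0 k z)) := exd_iter_cA h.1 k i hb0
          simp only [cA, if_neg (fun e : (cA m0 k)^[i] (bottom m0 k z) = d => h.2.2 (e ▸ hw))]
        rw [iter_eq_of_agree_upto hag, hn]
  | L m0 k0 x0 y0 ih =>
      intro k z hz
      have hz0 : exd m0 z := hz
      by_cases hk : k = k0
      case neg =>
        obtain ⟨n, hn⟩ := ih h.1 k z hz0
        refine ⟨n, ?_⟩
        have hbL : bottom (L m0 k0 x0 y0) k z = bottom m0 k z := by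
          simp only [bottom, if_neg hk]
        rw [hbL]
        have hag : ∀ i, i < n → cA (L m0 k0 x0 y0) k ((cA m0 k)^[i] (bottom m0 k z))
            = cA m0 k ((cA m0 k)^[i] (bottom m0 k z)) := by
          intro i hi
          simp only [cA, if_neg hk]
        rw [iter_eq_of_agree_upto hag, hn]
      case pos =>
        subst hk
        have ex0 : exd m0 x0 := h.2.1
        have ey0 : exd m0 y0 := h.2.2.1
        have hAx0 : A m0 k x0 = nil := not_not.mp h.2.2.2.1
        have hA1y0 : A_1 m0 k y0 = nil := not_not.mp h.2.2.2.2.1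
        have htx0 : top m0 k x0 = x0 := top_nosucc h.1 ex0 hAx0
        have hby0 : bottom m0 k y0 = y0 := bottom_nopred h.1 ey0 hA1y0
        have hbx0y0 : bottom m0 k x0 ≠ y0 := by
          intro e
          apply h.2.2.2.2.2
          rw [cA_eq h.1 ex0, if_pos hAx0, e]
        have hcAx0 : cA m0 k x0 = bottom m0 k x0 := by
          rw [cA_eq h.1 ex0, if_pos hAx0]
        have hCA : ∀ w, cA (L m0 k x0 y0) k w =
            if w = x0 then y0 else if w = top m0 k y0 then bottom m0 k x0 else cA m0 k w := by
          intro w; simp [cA]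
        have hB : ∀ w, bottom (L m0 k x0 y0) k w =
            if bottom m0 k w = y0 then bottom m0 k x0 else bottom m0 k w := by
          intro w; simp [bottom]
        -- minimal path in m0 from bottom to a target
        have min_path : ∀ t, exd m0 t → ∃ n, (cA m0 k)^[n] (bottom m0 k t) = t ∧
            ∀ i, i < n → (cA m0 k)^[i] (bottom m0 k t) ≠ t := by
          intro t ht
          have hex : ∃ n, (cA m0 k)^[n] (bottom m0 k t) = t := ih h.1 k t ht
          classical
          refine ⟨Nat.find hex, Nat.find_spec hex, fun i hi => Nat.find_min hex hi⟩
        by_cases hbz : bottom m0 k z = y0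
        case neg =>
          obtain ⟨n, hn, hmin⟩ := min_path z hz0
          refine ⟨n, ?_⟩
          rw [hB, if_neg hbz]
          have hb0 : exd m0 (bottom m0 k z) := exd_bottom h.1 k z hz0
          have hag : ∀ i, i < n → cA (L m0 k x0 y0) k ((cA m0 k)^[i] (bottom m0 k z))
              = cA m0 k ((cA m0 k)^[i] (bottom m0 k z)) := by
            intro i hi
            set w := (cA m0 k)^[i] (bottom m0 k z) with hw
            have hbw : bottom m0 k w = bottom m0 k z := by
              rw [hw, bottom_iter_cA h.1 k i hb0, bottom_bottom h.1 k hz0]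
            have hwx0 : w ≠ x0 := by
              intro e
              exact reach_min_no_return hn hmin hi
                (by rw [← hw, e, hcAx0, ← e, hbw])
            have hwt : w ≠ top m0 k y0 := by
              intro e
              apply hbz
              rw [← hbw, e, bottom_top h.1 k ey0, hby0]
            rw [hCA, if_neg hwx0, if_neg hwt]
          rw [iter_eq_of_agree_upto hag, hn]
        case pos =>
          obtain ⟨n1, hn1, hmin1⟩ := min_path x0 ex0
          obtain ⟨n2, hn2, hmin2⟩ := min_path z hz0
          rw [hbz] at hn2 hmin2
          refine ⟨n1 + 1 + n2, ?_⟩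
          rw [hB, if_pos hbz]
          set g := cA (L m0 k x0 y0) k with hg
          have hb1 : exd m0 (bottom m0 k x0) := exd_bottom h.1 k x0 ex0
          -- part 1 : to x0
          have hag1 : ∀ i, i < n1 → g ((cA m0 k)^[i] (bottom m0 k x0))
              = cA m0 k ((cA m0 k)^[i] (bottom m0 k x0)) := by
            intro i hi
            set w := (cA m0 k)^[i] (bottom m0 k x0) with hw
            have hbw : bottom m0 k w = bottom m0 k x0 := by
              rw [hw, bottom_iter_cA h.1 k i hb1, bottom_bottom h.1 k ex0]
            have hwx0 : w ≠ x0 := by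
              intro e
              exact reach_min_no_return hn1 hmin1 hi
                (by rw [← hw, e, hcAx0, ← e, hbw])
            have hwt : w ≠ top m0 k y0 := by
              intro e
              apply hbx0y0
              rw [← hbw, e, bottom_top h.1 k ey0, hby0]
            rw [hCA, if_neg hwx0, if_neg hwt]
          have hpart1 : g^[n1] (bottom m0 k x0) = x0 := by
            rw [iter_eq_of_agree_upto hag1, hn1]
          -- step : x0 to y0
          have hstep : g x0 = y0 := by
            rw [hCA, if_pos rfl]
          -- part 2 : y0 to z
          have hag2 : ∀ i, i < n2 → g ((cA m0 k)^[i] y0)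
              = cA m0 k ((cA m0 k)^[i] y0) := by
            intro i hi
            set w := (cA m0 k)^[i] y0 with hw
            have hbw : bottom m0 k w = y0 := by
              rw [hw, bottom_iter_cA h.1 k i ey0, hby0]
            have hwx0 : w ≠ x0 := fun e => hbx0y0 (by rw [← e, hbw])
            have hwt : w ≠ top m0 k y0 := by
              intro e
              exact reach_min_no_return hn2 hmin2 hi
                (by rw [← hw, e, cA_top h.1 k ey0, hby0])
            rw [hCA, if_neg hwx0, if_neg hwt]
          have hpart2 : g^[n2] y0 = z := by
            rw [iter_eq_of_agree_upto hag2, hn2]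
          rw [show n1 + 1 + n2 = n2 + (1 + n1) by omega, Function.iterate_add_apply,
              Function.iterate_add_apply, Function.iterate_one, hpart1, hstep, hpart2]

end Fmap
namespace Fmap

section abstractReach

variable {f : ℕ → ℕ} {P : ℕ → Prop}

lemma iter_inj (hf : ∀ w, P w → P (f w))
    (hinj : ∀ z t, P z → P t → f z = f t → z = t) :
    ∀ n z t, P z → P t → f^[n] z = f^[n] t → z = t := by
  intro n
  induction n with
  | zero => intro z t _ _ e; exact e
  | succ n ih =>
      intro z t hz ht e
      rw [Function.iterate_succ_apply, Function.iterate_succ_apply] at e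
      exact hinj z t hz ht (ih (f z) (f t) (hf z hz) (hf t ht) e)

lemma period_exists (hfin : ∃ s : Finset ℕ, ∀ z, P z → z ∈ s)
    (hf : ∀ w, P w → P (f w))
    (hinj : ∀ z t, P z → P t → f z = f t → z = t)
    {z : ℕ} (hz : P z) : ∃ p, 0 < p ∧ f^[p] z = z := by
  obtain ⟨s, hs⟩ := hfin
  have key : ∃ i j : ℕ, i < j ∧ f^[i] z = f^[j] z := by
    obtain ⟨i, j, hne, heq⟩ := Finite.exists_ne_map_eq_of_infinite
      (fun i : ℕ => (⟨f^[i] z, hs _ (iter_pres hf i z hz)⟩ : {w // w ∈ s}))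
    have heq' : f^[i] z = f^[j] z := congrArg Subtype.val heq
    rcases lt_or_gt_of_ne hne with h | h
    · exact ⟨i, j, h, heq'⟩
    · exact ⟨j, i, h, heq'.symm⟩
  obtain ⟨i, j, hij, heq⟩ := key
  refine ⟨j - i, by omega, ?_⟩
  have h1 : f^[i] (f^[j-i] z) = f^[i] z := by
    rw [← Function.iterate_add_apply, show i + (j - i) = j by omega]
    exact heq.symm
  exact (iter_inj hf hinj i _ _ (iter_pres hf _ z hz) hz h1)

lemma reach_symm (hfin : ∃ s : Finset ℕ, ∀ z, P z → z ∈ s)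
    (hf : ∀ w, P w → P (f w))
    (hinj : ∀ z t, P z → P t → f z = f t → z = t)
    {z t : ℕ} (hz : P z) : (∃ n, f^[n] z = t) → ∃ n, f^[n] t = z := by
  rintro ⟨n, rfl⟩
  obtain ⟨p, hp, hpz⟩ := period_exists hfin hf hinj hz
  refine ⟨p * (n + 1) - n, ?_⟩
  have hle : n + 1 ≤ p * (n + 1) := Nat.le_mul_of_pos_left _ hp
  rw [← Function.iterate_add_apply, show p * (n+1) - n + n = p * (n+1) by omega,
      Function.iterate_mul]
  exact Function.iterate_fixed hpz (n+1)

end abstractReach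

variable {m : Fmap}

lemma cA_inj (h : inv_hmap m) (k : Dim) :
    ∀ z t, exd m z → exd m t → cA m k z = cA m k t → z = t := by
  intro z t hz ht e
  have := congrArg (cA_1 m k) e
  rwa [cA_1_cA h hz, cA_1_cA h ht] at this

lemma cA_1_inj (h : inv_hmap m) (k : Dim) :
    ∀ z t, exd m z → exd m t → cA_1 m k z = cA_1 m k t → z = t := by
  intro z t hz ht e
  have := congrArg (cA m k) e
  rwa [cA_cA_1 h hz, cA_cA_1 h ht] at this

lemma exd_cF (h : inv_hmap m) {z : Nat} (hz : exd m z) : exd m (cF m z) :=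
  exd_cA_1 h _ (exd_cA_1 h _ hz)

lemma cF_inj (h : inv_hmap m) :
    ∀ z t, exd m z → exd m t → cF m z = cF m t → z = t := by
  intro z t hz ht e
  exact cA_1_inj h _ z t hz ht
    (cA_1_inj h _ _ _ (exd_cA_1 h _ hz) (exd_cA_1 h _ ht) e)

lemma expe_refl {z : Nat} (hz : exd m z) : expe m z z := ⟨hz, 0, rfl⟩

lemma exd_expe (h : inv_hmap m) {z t : Nat} (he : expe m z t) : exd m t := by
  obtain ⟨hz, n, hn⟩ := he
  rw [← hn]
  exact iter_pres (fun w hw => exd_cA h _ hw) n z hz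

lemma expe_trans (h : inv_hmap m) {z t u : Nat} (h1 : expe m z t) (h2 : expe m t u) :
    expe m z u := by
  obtain ⟨hz, n, hn⟩ := h1
  obtain ⟨ht, n', hn'⟩ := h2
  exact ⟨hz, n' + n, by rw [Function.iterate_add_apply, hn, hn']⟩

lemma expe_symm (h : inv_hmap m) {z t : Nat} (h1 : expe m z t) : expe m t z := by
  obtain ⟨hz, n, hn⟩ := h1
  have ht : exd m t := exd_expe h ⟨hz, n, hn⟩
  exact ⟨ht, reach_symm (exd_finite m) (fun w hw => exd_cA h _ hw)
    (cA_inj h Dim.zero) hz ⟨n, hn⟩⟩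

lemma expf_refl {z : Nat} (hz : exd m z) : expf m z z := ⟨hz, 0, rfl⟩

lemma exd_expf (h : inv_hmap m) {z t : Nat} (he : expf m z t) : exd m t := by
  obtain ⟨hz, n, hn⟩ := he
  rw [← hn]
  exact iter_pres (fun w hw => exd_cF h hw) n z hz

lemma expf_trans (h : inv_hmap m) {z t u : Nat} (h1 : expf m z t) (h2 : expf m t u) :
    expf m z u := by
  obtain ⟨hz, n, hn⟩ := h1
  obtain ⟨ht, n', hn'⟩ := h2
  exact ⟨hz, n' + n, by rw [Function.iterate_add_apply, hn, hn']⟩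

lemma expf_symm (h : inv_hmap m) {z t : Nat} (h1 : expf m z t) : expf m t z := by
  obtain ⟨hz, n, hn⟩ := h1
  have ht : exd m t := exd_expf h ⟨hz, n, hn⟩
  exact ⟨ht, reach_symm (exd_finite m) (fun w hw => exd_cF h hw)
    (cF_inj h) hz ⟨n, hn⟩⟩

lemma expe_bottom_eq (h : inv_hmap m) {z t : Nat} (he : expe m z t) :
    bottom m Dim.zero z = bottom m Dim.zero t := by
  obtain ⟨hz, n, hn⟩ := he
  rw [← hn]
  exact (bottom_iter_cA h Dim.zero n hz).symm

lemma expe_of_bottom_eq (h : inv_hmap m) {z t : Nat} (hz : exd m z) (ht : exd m t)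
    (he : bottom m Dim.zero z = bottom m Dim.zero t) : expe m z t := by
  have h1 : expe m (bottom m Dim.zero z) z :=
    ⟨exd_bottom h _ z hz, bottom_reach h Dim.zero z hz⟩
  have h2 : expe m (bottom m Dim.zero t) t :=
    ⟨exd_bottom h _ t ht, bottom_reach h Dim.zero t ht⟩
  exact expe_trans h (expe_trans h (expe_symm h h1) (he ▸ expe_refl (exd_bottom h _ z hz))) h2

end Fmap
namespace Fmap

section helperEqs
variable {M : Fmap} {k k0 : Dim} {x0 y0 : Nat}

lemma A_L (hk : k = k0) (z : Nat) :
    A (L M k0 x0 y0) k z = if z = x0 then y0 else A M k z := by subst hk; simp [A]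
lemma A_L_ne (hk : k ≠ k0) (z : Nat) : A (L M k0 x0 y0) k z = A M k z := by simp [A, hk]
lemma A_1_L (hk : k = k0) (z : Nat) :
    A_1 (L M k0 x0 y0) k z = if z = y0 then x0 else A_1 M k z := by subst hk; simp [A_1]
lemma A_1_L_ne (hk : k ≠ k0) (z : Nat) : A_1 (L M k0 x0 y0) k z = A_1 M k z := by
  simp [A_1, hk]
lemma bottom_L (hk : k = k0) (z : Nat) :
    bottom (L M k0 x0 y0) k z =
      if bottom M k z = y0 then bottom M k x0 else bottom M k z := by
  subst hk; simp [bottom]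
lemma bottom_L_ne (hk : k ≠ k0) (z : Nat) : bottom (L M k0 x0 y0) k z = bottom M k z := by
  simp [bottom, hk]
lemma top_L (hk : k = k0) (z : Nat) :
    top (L M k0 x0 y0) k z = if top M k z = x0 then top M k y0 else top M k z := by
  subst hk; simp [top]
lemma top_L_ne (hk : k ≠ k0) (z : Nat) : top (L M k0 x0 y0) k z = top M k z := by
  simp [top, hk]
lemma cA_L (hk : k = k0) (z : Nat) :
    cA (L M k0 x0 y0) k z =
      if z = x0 then y0 else if z = top M k y0 then bottom M k x0 else cA M k z := by
  subst hk; simp [cA]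
lemma cA_L_ne (hk : k ≠ k0) (z : Nat) : cA (L M k0 x0 y0) k z = cA M k z := by
  simp [cA, hk]
lemma cA_1_L (hk : k = k0) (z : Nat) :
    cA_1 (L M k0 x0 y0) k z =
      if z = y0 then x0 else if z = bottom M k x0 then top M k y0 else cA_1 M k z := by
  subst hk; simp [cA_1]
lemma cA_1_L_ne (hk : k ≠ k0) (z : Nat) : cA_1 (L M k0 x0 y0) k z = cA_1 M k z := by
  simp [cA_1, hk]

lemma B_L (m0 : Fmap) (k0 : Dim) (x0 y0 : Nat) (k : Dim) (x : Nat) :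
    B (L m0 k0 x0 y0) k x =
      if k = k0 ∧ x = x0 then m0 else L (B m0 k x) k0 x0 y0 := rfl
lemma B_I (m0 : Fmap) (d : Nat) (k : Dim) (x : Nat) :
    B (I m0 d) k x = I (B m0 k x) d := rfl
lemma A_I (m0 : Fmap) (d : Nat) (k : Dim) (z : Nat) : A (I m0 d) k z = A m0 k z := rfl
lemma A_1_I (m0 : Fmap) (d : Nat) (k : Dim) (z : Nat) : A_1 (I m0 d) k z = A_1 m0 k z := rfl
lemma bottom_I (m0 : Fmap) (d : Nat) (k : Dim) (z : Nat) :
    bottom (I m0 d) k z = if z = d then z else bottom m0 k z := rfl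
lemma top_I (m0 : Fmap) (d : Nat) (k : Dim) (z : Nat) :
    top (I m0 d) k z = if z = d then z else top m0 k z := rfl
lemma cA_I (m0 : Fmap) (d : Nat) (k : Dim) (z : Nat) :
    cA (I m0 d) k z = if z = d then z else cA m0 k z := rfl
lemma cA_1_I (m0 : Fmap) (d : Nat) (k : Dim) (z : Nat) :
    cA_1 (I m0 d) k z = if z = d then z else cA_1 m0 k z := rfl

end helperEqs

lemma exd_B (m : Fmap) (k : Dim) (x : Nat) : ∀ z, exd (B m k x) z ↔ exd m z := by
  induction m with
  | V => intro z; exact Iff.rfl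
  | I m0 d ih =>
      intro z
      show z = d ∨ exd (B m0 k x) z ↔ z = d ∨ exd m0 z
      rw [ih z]
  | L m0 k0 x0 y0 ih =>
      intro z
      rw [B_L]
      by_cases hc : k = k0 ∧ x = x0
      · rw [if_pos hc]; exact Iff.rfl
      · rw [if_neg hc]; exact ih z

lemma not_succ_B {m : Fmap} (h : inv_hmap m) {k : Dim} {x : Nat} (hs : ¬ succd m k x) :
    B m k x = m := by
  induction m with
  | V => rfl
  | I m0 d ih => rw [B_I, ih h.1 hs]
  | L m0 k0 x0 y0 ih =>
      rw [B_L]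
      have hc : ¬ (k = k0 ∧ x = x0) := by
        rintro ⟨rfl, rfl⟩
        apply hs
        show A (L m0 k x y0) k x ≠ nil
        rw [A_L rfl, if_pos rfl]
        exact exd_not_nil h.1 y0 h.2.2.1
      rw [if_neg hc]
      have hs0 : ¬ succd m0 k x := by
        intro hs0
        apply hs
        show A (L m0 k0 x0 y0) k x ≠ nil
        by_cases hk : k = k0
        · rw [A_L hk]
          by_cases hx : x = x0
          · exact absurd ⟨hk, hx⟩ hc
          · rw [if_neg hx]; exact hs0
        · rw [A_L_ne hk]; exact hs0
      rw [ih h.1 hs0]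

lemma succd_of_L {m0 : Fmap} {k k0 : Dim} {x0 y0 x : Nat} (hc : ¬ (k = k0 ∧ x = x0))
    (hs : succd (L m0 k0 x0 y0) k x) : succd m0 k x := by
  by_cases hk : k = k0
  · have hx : x ≠ x0 := fun e => hc ⟨hk, e⟩
    have := hs
    rw [show succd (L m0 k0 x0 y0) k x = (A (L m0 k0 x0 y0) k x ≠ nil) from rfl,
        A_L hk, if_neg hx] at this
    exact this
  · have := hs
    rw [show succd (L m0 k0 x0 y0) k x = (A (L m0 k0 x0 y0) k x ≠ nil) from rfl,
        A_L_ne hk] at this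
    exact this

lemma A_B {m : Fmap} (h : inv_hmap m) (k : Dim) (x : Nat) :
    ∀ z, A (B m k x) k z = if z = x then nil else A m k z := by
  induction m with
  | V =>
      intro z
      show nil = if z = x then nil else nil
      by_cases hz : z = x
      · rw [if_pos hz]
      · rw [if_neg hz]
  | I m0 d ih => intro z; exact ih h.1 z
  | L m0 k0 x0 y0 ih =>
      intro z
      rw [B_L]
      by_cases hc : k = k0 ∧ x = x0
      · obtain ⟨rfl, rfl⟩ := hc
        rw [if_pos ⟨rfl, rfl⟩, A_L rfl]
        by_cases hz : z = x
        · rw [if_pos hz, hz]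
          exact not_not.mp h.2.2.2.1
        · rw [if_neg hz, if_neg hz]
      · rw [if_neg hc]
        by_cases hk : k = k0
        · have hx : x ≠ x0 := fun e => hc ⟨hk, e⟩
          rw [A_L hk, A_L hk]
          by_cases hz : z = x0
          · rw [if_pos hz, if_pos hz, if_neg (hz ▸ (Ne.symm hx))]
          · rw [if_neg hz, if_neg hz, ih h.1 z]
        · rw [A_L_ne hk, A_L_ne hk, ih h.1 z]

lemma A_1_B {m : Fmap} (h : inv_hmap m) {k : Dim} {x : Nat} (hs : succd m k x) :
    ∀ z, A_1 (B m k x) k z = if z = A m k x then nil else A_1 m k z := by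
  induction m with
  | V => exact absurd rfl hs
  | I m0 d ih => intro z; exact ih h.1 hs z
  | L m0 k0 x0 y0 ih =>
      intro z
      rw [B_L]
      by_cases hc : k = k0 ∧ x = x0
      · obtain ⟨rfl, rfl⟩ := hc
        rw [if_pos ⟨rfl, rfl⟩, A_1_L rfl, A_L rfl, if_pos rfl]
        by_cases hz : z = y0
        · rw [if_pos hz, hz]
          exact not_not.mp h.2.2.2.2.1
        · rw [if_neg hz, if_neg hz]
      · rw [if_neg hc]
        have hs0 : succd m0 k x := succd_of_L hc hs
        by_cases hk : k = k0
        · subst hk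
          have hx : x ≠ x0 := fun e => hc ⟨rfl, e⟩
          rw [A_1_L rfl, A_1_L rfl, A_L rfl, if_neg hx]
          have hAne : A m0 k x ≠ y0 := by
            intro e
            apply h.2.2.2.2.1
            show A_1 m0 k y0 ≠ nil
            rw [← e, A_1_A h.1 k x hs0]
            exact exd_not_nil h.1 x (succd_exd h.1 k x hs0)
          by_cases hz : z = y0
          · rw [if_pos hz, if_pos hz, if_neg (hz ▸ (Ne.symm hAne))]
          · rw [if_neg hz, if_neg hz, ih h.1 hs0 z]
        · rw [A_1_L_ne hk, A_1_L_ne hk, A_L_ne hk, ih h.1 hs0 z]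

lemma bottom_B_cases {m : Fmap} (h : inv_hmap m) {k : Dim} {x : Nat} (hs : succd m k x) :
    ∀ z, exd m z → bottom (B m k x) k z = bottom m k z ∨
      (bottom (B m k x) k z = A m k x ∧ bottom m k z = bottom m k x) := by
  induction m with
  | V => exact absurd rfl hs
  | I m0 d ih =>
      intro z hz
      have hs0 : succd m0 k x := hs
      have hxd : x ≠ d := fun e => h.2.2 (e ▸ succd_exd h.1 k x hs0)
      rw [B_I, bottom_I, bottom_I, bottom_I, A_I, if_neg hxd]
      by_cases hzd : z = d
      · rw [if_pos hzd, if_pos hzd]; left; rfl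
      · rw [if_neg hzd, if_neg hzd]
        exact ih h.1 hs0 z (hz.resolve_left hzd)
  | L m0 k0 x0 y0 ih =>
      intro z hz
      have hz0 : exd m0 z := hz
      rw [B_L]
      by_cases hc : k = k0 ∧ x = x0
      · obtain ⟨rfl, rfl⟩ := hc
        rw [if_pos ⟨rfl, rfl⟩]
        have hAx0 : A m0 k x = nil := not_not.mp h.2.2.2.1
        have hbx0y0 : bottom m0 k x ≠ y0 := by
          intro e
          apply h.2.2.2.2.2
          rw [cA_eq h.1 h.2.1, if_pos hAx0, e]
        rw [A_L rfl, if_pos rfl, bottom_L rfl, bottom_L rfl]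
        by_cases hb : bottom m0 k z = y0
        · right
          rw [if_pos hb, if_neg hbx0y0]
          exact ⟨hb, rfl⟩
        · left; rw [if_neg hb]
      · rw [if_neg hc]
        have hs0 : succd m0 k x := succd_of_L hc hs
        by_cases hk : k = k0
        case neg =>
          rw [bottom_L_ne hk, bottom_L_ne hk, bottom_L_ne hk, A_L_ne hk]
          exact ih h.1 hs0 z hz0
        case pos =>
          subst hk
          have hx : x ≠ x0 := fun e => hc ⟨rfl, e⟩
          have hAx0 : A m0 k x0 = nil := not_not.mp h.2.2.2.1
          have hbx0y0 : bottom m0 k x0 ≠ y0 := by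
            intro e
            apply h.2.2.2.2.2
            rw [cA_eq h.1 h.2.1, if_pos hAx0, e]
          have hAne : A m0 k x ≠ y0 := by
            intro e
            apply h.2.2.2.2.1
            show A_1 m0 k y0 ≠ nil
            rw [← e, A_1_A h.1 k x hs0]
            exact exd_not_nil h.1 x (succd_exd h.1 k x hs0)
          rw [A_L rfl, if_neg hx, bottom_L rfl, bottom_L rfl, bottom_L rfl]
          rcases ih h.1 hs0 z hz0 with h1 | ⟨h1, h2⟩
          · rw [h1]
            by_cases hb : bottom m0 k z = y0
            · rw [if_pos hb, if_pos hb]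
              rcases ih h.1 hs0 x0 h.2.1 with g1 | ⟨g1, g2⟩
              · left; rw [g1]
              · right
                refine ⟨g1, ?_⟩
                have hbxy : bottom m0 k x ≠ y0 := fun e => hbx0y0 (g2.trans e)
                rw [if_neg hbxy]
                exact g2
            · left; rw [if_neg hb, if_neg hb]
          · rw [h1, if_neg hAne, h2]
            right
            exact ⟨rfl, rfl⟩

end Fmap
namespace Fmap

lemma bottom_B_x {m : Fmap} (h : inv_hmap m) {k : Dim} {x : Nat} (hs : succd m k x) :
    bottom (B m k x) k x = bottom m k x := by
  induction m with
  | V => exact absurd rfl hs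
  | I m0 d ih =>
      have hs0 : succd m0 k x := hs
      have hxd : x ≠ d := fun e => h.2.2 (e ▸ succd_exd h.1 k x hs0)
      rw [B_I, bottom_I, bottom_I, if_neg hxd, if_neg hxd]
      exact ih h.1 hs0
  | L m0 k0 x0 y0 ih =>
      rw [B_L]
      by_cases hc : k = k0 ∧ x = x0
      · obtain ⟨rfl, rfl⟩ := hc
        rw [if_pos ⟨rfl, rfl⟩, bottom_L rfl]
        have hAx0 : A m0 k x = nil := not_not.mp h.2.2.2.1
        have hbx0y0 : bottom m0 k x ≠ y0 := by
          intro e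
          apply h.2.2.2.2.2
          rw [cA_eq h.1 h.2.1, if_pos hAx0, e]
        rw [if_neg hbx0y0]
      · rw [if_neg hc]
        have hs0 : succd m0 k x := succd_of_L hc hs
        by_cases hk : k = k0
        case neg =>
          rw [bottom_L_ne hk, bottom_L_ne hk]
          exact ih h.1 hs0
        case pos =>
          subst hk
          have hAx0 : A m0 k x0 = nil := not_not.mp h.2.2.2.1
          have hbx0y0 : bottom m0 k x0 ≠ y0 := by
            intro e
            apply h.2.2.2.2.2
            rw [cA_eq h.1 h.2.1, if_pos hAx0, e]
          rw [bottom_L rfl, bottom_L rfl, ih h.1 hs0]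
          by_cases hb : bottom m0 k x = y0
          · rw [if_pos hb, if_pos hb]
            rcases bottom_B_cases h.1 hs0 x0 h.2.1 with g1 | ⟨g1, g2⟩
            · exact g1
            · exact absurd (g2.trans hb) hbx0y0
          · rw [if_neg hb, if_neg hb]

lemma bottom_B_top {m : Fmap} (h : inv_hmap m) {k : Dim} {x : Nat} (hs : succd m k x) :
    bottom (B m k x) k (top m k x) = A m k x := by
  induction m with
  | V => exact absurd rfl hs
  | I m0 d ih =>
      have hs0 : succd m0 k x := hs
      have hex : exd m0 x := succd_exd h.1 k x hs0
      have hxd : x ≠ d := fun e => h.2.2 (e ▸ hex)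
      have htd : top m0 k x ≠ d := fun e => h.2.2 (e ▸ exd_top h.1 k x hex)
      rw [B_I, top_I, if_neg hxd, bottom_I, if_neg htd, A_I]
      exact ih h.1 hs0
  | L m0 k0 x0 y0 ih =>
      rw [B_L]
      by_cases hc : k = k0 ∧ x = x0
      · obtain ⟨rfl, rfl⟩ := hc
        rw [if_pos ⟨rfl, rfl⟩]
        have ex0 : exd m0 x := h.2.1
        have ey0 : exd m0 y0 := h.2.2.1
        have hAx0 : A m0 k x = nil := not_not.mp h.2.2.2.1
        have hA1y0 : A_1 m0 k y0 = nil := not_not.mp h.2.2.2.2.1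
        have htx0 : top m0 k x = x := top_nosucc h.1 ex0 hAx0
        have hby0 : bottom m0 k y0 = y0 := bottom_nopred h.1 ey0 hA1y0
        rw [top_L rfl, if_pos htx0, A_L rfl, if_pos rfl, bottom_top h.1 k ey0, hby0]
      · rw [if_neg hc]
        have hs0 : succd m0 k x := succd_of_L hc hs
        by_cases hk : k = k0
        case neg =>
          rw [top_L_ne hk, bottom_L_ne hk, A_L_ne hk]
          exact ih h.1 hs0
        case pos =>
          subst hk
          have hx : x ≠ x0 := fun e => hc ⟨rfl, e⟩
          have ex0 : exd m0 x0 := h.2.1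
          have ey0 : exd m0 y0 := h.2.2.1
          have hAx0 : A m0 k x0 = nil := not_not.mp h.2.2.2.1
          have hA1y0 : A_1 m0 k y0 = nil := not_not.mp h.2.2.2.2.1
          have htx0 : top m0 k x0 = x0 := top_nosucc h.1 ex0 hAx0
          have hby0 : bottom m0 k y0 = y0 := bottom_nopred h.1 ey0 hA1y0
          have hbx0y0 : bottom m0 k x0 ≠ y0 := by
            intro e
            apply h.2.2.2.2.2
            rw [cA_eq h.1 ex0, if_pos hAx0, e]
          have hex : exd m0 x := succd_exd h.1 k x hs0
          have hAne : A m0 k x ≠ y0 := by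
            intro e
            apply h.2.2.2.2.1
            show A_1 m0 k y0 ≠ nil
            rw [← e, A_1_A h.1 k x hs0]
            exact exd_not_nil h.1 x hex
          rw [A_L rfl, if_neg hx, top_L rfl]
          by_cases ht : top m0 k x = x0
          case pos =>
            rw [if_pos ht, bottom_L rfl]
            have hbt : bottom m0 k (top m0 k y0) = y0 := by
              rw [bottom_top h.1 k ey0, hby0]
            have hbx : bottom m0 k x = bottom m0 k x0 :=
              (bt_iff h.1 hex ex0).mpr (by rw [ht, htx0])
            have hBout : bottom (B m0 k x) k (top m0 k y0) = y0 := by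
              rcases bottom_B_cases h.1 hs0 (top m0 k y0) (exd_top h.1 k y0 ey0) with
                g1 | ⟨g1, g2⟩
              · rw [g1, hbt]
              · exfalso
                apply hbx0y0
                rw [← hbx, ← g2, hbt]
            rw [hBout, if_pos rfl, ← ht, ih h.1 hs0]
          case neg =>
            rw [if_neg ht, bottom_L rfl, ih h.1 hs0, if_neg hAne]

lemma A_B_ne {m : Fmap} {j k : Dim} (hjk : j ≠ k) (x : Nat) :
    ∀ z, A (B m k x) j z = A m j z := by
  induction m with
  | V => intro z; rfl
  | I m0 d ih => intro z; exact ih z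
  | L m0 k0 x0 y0 ih =>
      intro z
      rw [B_L]
      by_cases hc : k = k0 ∧ x = x0
      · obtain ⟨rfl, rfl⟩ := hc
        rw [if_pos ⟨rfl, rfl⟩, A_L_ne hjk]
      · rw [if_neg hc]
        by_cases hj : j = k0
        · rw [A_L hj, A_L hj, ih z]
        · rw [A_L_ne hj, A_L_ne hj, ih z]

lemma A_1_B_ne {m : Fmap} {j k : Dim} (hjk : j ≠ k) (x : Nat) :
    ∀ z, A_1 (B m k x) j z = A_1 m j z := by
  induction m with
  | V => intro z; rfl
  | I m0 d ih => intro z; exact ih z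
  | L m0 k0 x0 y0 ih =>
      intro z
      rw [B_L]
      by_cases hc : k = k0 ∧ x = x0
      · obtain ⟨rfl, rfl⟩ := hc
        rw [if_pos ⟨rfl, rfl⟩, A_1_L_ne hjk]
      · rw [if_neg hc]
        by_cases hj : j = k0
        · rw [A_1_L hj, A_1_L hj, ih z]
        · rw [A_1_L_ne hj, A_1_L_ne hj, ih z]

lemma bottom_B_ne {m : Fmap} {j k : Dim} (hjk : j ≠ k) (x : Nat) :
    ∀ z, bottom (B m k x) j z = bottom m j z := by
  induction m with
  | V => intro z; rfl
  | I m0 d ih =>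
      intro z
      rw [B_I, bottom_I, bottom_I]
      by_cases hzd : z = d
      · rw [if_pos hzd, if_pos hzd]
      · rw [if_neg hzd, if_neg hzd, ih z]
  | L m0 k0 x0 y0 ih =>
      intro z
      rw [B_L]
      by_cases hc : k = k0 ∧ x = x0
      · obtain ⟨rfl, rfl⟩ := hc
        rw [if_pos ⟨rfl, rfl⟩, bottom_L_ne hjk]
      · rw [if_neg hc]
        by_cases hj : j = k0
        · rw [bottom_L hj, bottom_L hj, ih z, ih x0]
        · rw [bottom_L_ne hj, bottom_L_ne hj, ih z]

lemma top_B_ne {m : Fmap} {j k : Dim} (hjk : j ≠ k) (x : Nat) :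
    ∀ z, top (B m k x) j z = top m j z := by
  induction m with
  | V => intro z; rfl
  | I m0 d ih =>
      intro z
      rw [B_I, top_I, top_I]
      by_cases hzd : z = d
      · rw [if_pos hzd, if_pos hzd]
      · rw [if_neg hzd, if_neg hzd, ih z]
  | L m0 k0 x0 y0 ih =>
      intro z
      rw [B_L]
      by_cases hc : k = k0 ∧ x = x0
      · obtain ⟨rfl, rfl⟩ := hc
        rw [if_pos ⟨rfl, rfl⟩, top_L_ne hjk]
      · rw [if_neg hc]
        by_cases hj : j = k0
        · rw [top_L hj, top_L hj, ih z, ih y0]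
        · rw [top_L_ne hj, top_L_ne hj, ih z]

lemma cA_B_ne {m : Fmap} {j k : Dim} (hjk : j ≠ k) (x : Nat) :
    ∀ z, cA (B m k x) j z = cA m j z := by
  induction m with
  | V => intro z; rfl
  | I m0 d ih =>
      intro z
      rw [B_I, cA_I, cA_I]
      by_cases hzd : z = d
      · rw [if_pos hzd, if_pos hzd]
      · rw [if_neg hzd, if_neg hzd, ih z]
  | L m0 k0 x0 y0 ih =>
      intro z
      rw [B_L]
      by_cases hc : k = k0 ∧ x = x0
      · obtain ⟨rfl, rfl⟩ := hc
        rw [if_pos ⟨rfl, rfl⟩, cA_L_ne hjk]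
      · rw [if_neg hc]
        by_cases hj : j = k0
        · rw [cA_L hj, cA_L hj, ih z, top_B_ne hjk x y0, bottom_B_ne hjk x x0]
        · rw [cA_L_ne hj, cA_L_ne hj, ih z]

lemma cA_1_B_ne {m : Fmap} {j k : Dim} (hjk : j ≠ k) (x : Nat) :
    ∀ z, cA_1 (B m k x) j z = cA_1 m j z := by
  induction m with
  | V => intro z; rfl
  | I m0 d ih =>
      intro z
      rw [B_I, cA_1_I, cA_1_I]
      by_cases hzd : z = d
      · rw [if_pos hzd, if_pos hzd]
      · rw [if_neg hzd, if_neg hzd, ih z]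
  | L m0 k0 x0 y0 ih =>
      intro z
      rw [B_L]
      by_cases hc : k = k0 ∧ x = x0
      · obtain ⟨rfl, rfl⟩ := hc
        rw [if_pos ⟨rfl, rfl⟩, cA_1_L_ne hjk]
      · rw [if_neg hc]
        by_cases hj : j = k0
        · rw [cA_1_L hj, cA_1_L hj, ih z, top_B_ne hjk x y0, bottom_B_ne hjk x x0]
        · rw [cA_1_L_ne hj, cA_1_L_ne hj, ih z]

lemma inv_hmap_B {m : Fmap} (h : inv_hmap m) (k : Dim) (x : Nat) :
    inv_hmap (B m k x) := by
  induction m with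
  | V => exact trivial
  | I m0 d ih =>
      rw [B_I]
      exact ⟨ih h.1, h.2.1, fun he => h.2.2 ((exd_B m0 k x d).mp he)⟩
  | L m0 k0 x0 y0 ih =>
      rw [B_L]
      by_cases hc : k = k0 ∧ x = x0
      · rw [if_pos hc]; exact h.1
      · rw [if_neg hc]
        by_cases hsx : succd m0 k x
        case neg => rw [not_succ_B h.1 hsx]; exact h
        case pos =>
          refine ⟨ih h.1, (exd_B m0 k x x0).mpr h.2.1, (exd_B m0 k x y0).mpr h.2.2.1,
            ?_, ?_, ?_⟩
          · -- no succ
            by_cases hk : k = k0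
            · subst hk
              have hx : x ≠ x0 := fun e => hc ⟨rfl, e⟩
              show A (B m0 k x) k x0 ≠ nil → False
              rw [A_B h.1 k x x0, if_neg (Ne.symm hx)]
              exact h.2.2.2.1
            · show A (B m0 k x) k0 x0 ≠ nil → False
              rw [A_B_ne (Ne.symm hk) x x0]
              exact h.2.2.2.1
          · -- no pred
            by_cases hk : k = k0
            · subst hk
              show A_1 (B m0 k x) k y0 ≠ nil → False
              rw [A_1_B h.1 hsx y0]
              by_cases hy : y0 = A m0 k x
              · rw [if_pos hy]; exact fun e => e rfl
              · rw [if_neg hy]; exact h.2.2.2.2.1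
            · show A_1 (B m0 k x) k0 y0 ≠ nil → False
              rw [A_1_B_ne (Ne.symm hk) x y0]
              exact h.2.2.2.2.1
          · -- cA ≠ y0
            by_cases hk : k = k0
            · subst hk
              have hx : x ≠ x0 := fun e => hc ⟨rfl, e⟩
              have hBinv : inv_hmap (B m0 k x) := ih h.1
              have hex0B : exd (B m0 k x) x0 := (exd_B m0 k x x0).mpr h.2.1
              have hAB : A (B m0 k x) k x0 = nil := by
                rw [A_B h.1 k x x0, if_neg (Ne.symm hx)]
                exact not_not.mp h.2.2.2.1
              rw [cA_eq hBinv hex0B, if_pos hAB]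
              rcases bottom_B_cases h.1 hsx x0 h.2.1 with g1 | ⟨g1, _⟩
              · rw [g1]
                intro e
                apply h.2.2.2.2.2
                rw [cA_eq h.1 h.2.1, if_pos (not_not.mp h.2.2.2.1), e]
              · rw [g1]
                intro e
                apply h.2.2.2.2.1
                show A_1 m0 k y0 ≠ nil
                rw [← e, A_1_A h.1 k x hsx]
                exact exd_not_nil h.1 x (succd_exd h.1 k x hsx)
            · rw [cA_B_ne (Ne.symm hk) x x0]
              exact h.2.2.2.2.2

end Fmap
namespace Fmap

section Bfacts

variable {m : Fmap} {k : Dim} {x : Nat}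

lemma y_ne_x0 (h : inv_hmap m) (hs : succd m k x) : A m k x ≠ bottom m k x := by
  intro e
  have hex : exd m x := succd_exd h k x hs
  have h1 : A_1 m k (A m k x) = x := A_1_A h k x hs
  have h2 : A_1 m k (bottom m k x) = nil := A_1_bottom h k hex
  rw [e, h2] at h1
  exact exd_not_nil h x hex h1.symm

lemma top_ne_x (h : inv_hmap m) (hs : succd m k x) : top m k x ≠ x := by
  intro e
  apply hs
  rw [← e]
  exact A_top h k (succd_exd h k x hs)

lemma bottom_B_out (h : inv_hmap m) (hs : succd m k x) {z : Nat} (hz : exd m z)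
    (hb : bottom m k z ≠ bottom m k x) : bottom (B m k x) k z = bottom m k z := by
  rcases bottom_B_cases h hs z hz with g1 | ⟨_, g2⟩
  · exact g1
  · exact absurd g2 hb

lemma A_B_nil (h : inv_hmap m) (hs : succd m k x) (z : Nat) (hz : A m k z = nil) :
    A (B m k x) k z = nil := by
  rw [A_B h k x z]
  by_cases e : z = x
  · rw [if_pos e]
  · rw [if_neg e, hz]

lemma A_1_B_nil (h : inv_hmap m) (hs : succd m k x) (z : Nat) (hz : A_1 m k z = nil) :
    A_1 (B m k x) k z = nil := by
  rw [A_1_B h hs z]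
  by_cases e : z = A m k x
  · rw [if_pos e]
  · rw [if_neg e, hz]

lemma top_B_out_nopred (h : inv_hmap m) (hs : succd m k x) {z : Nat} (hz : exd m z)
    (hnp : A_1 m k z = nil) (hzx0 : z ≠ bottom m k x) :
    top (B m k x) k z = top m k z := by
  have hinv1 : inv_hmap (B m k x) := inv_hmap_B h k x
  set t := top m k z with hts
  have het : exd m t := exd_top h k z hz
  have hbz : bottom m k z = z := bottom_nopred h hz hnp
  have hAt : A m k t = nil := A_top h k hz
  have hA1t : A (B m k x) k t = nil := A_B_nil h hs t hAt
  have htop1t : top (B m k x) k t = t := top_nosucc hinv1 ((exd_B m k x t).mpr het) hA1t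
  have hb1t : bottom (B m k x) k t = z := by
    rcases bottom_B_cases h hs t het with g1 | ⟨_, g2⟩
    · rw [g1, hts, bottom_top h k hz, hbz]
    · exfalso
      apply hzx0
      rw [← hbz, ← bottom_top h k hz, ← hts, g2]
  have hb1z : bottom (B m k x) k z = z := by
    have : A_1 (B m k x) k z = nil := A_1_B_nil h hs z hnp
    exact bottom_nopred hinv1 ((exd_B m k x z).mpr hz) this
  have : top (B m k x) k z = top (B m k x) k t :=
    (bt_iff hinv1 ((exd_B m k x z).mpr hz) ((exd_B m k x t).mpr het)).mp
      (by rw [hb1z, hb1t])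
  rw [this, htop1t]

lemma top_B_y (h : inv_hmap m) (hs : succd m k x) :
    top (B m k x) k (A m k x) = top m k x := by
  have hinv1 : inv_hmap (B m k x) := inv_hmap_B h k x
  have hex : exd m x := succd_exd h k x hs
  have hey : exd m (A m k x) := exd_A h k x hs
  have het : exd m (top m k x) := exd_top h k x hex
  have hA1y : A_1 (B m k x) k (A m k x) = nil := by
    rw [A_1_B h hs, if_pos rfl]
  have hb1y : bottom (B m k x) k (A m k x) = A m k x :=
    bottom_nopred hinv1 ((exd_B m k x _).mpr hey) hA1y
  have hb1t : bottom (B m k x) k (top m k x) = A m k x := bottom_B_top h hs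
  have htne : top m k x ≠ x := top_ne_x h hs
  have hAt : A (B m k x) k (top m k x) = nil := by
    rw [A_B h k x, if_neg htne]
    exact A_top h k hex
  have htt : top (B m k x) k (top m k x) = top m k x :=
    top_nosucc hinv1 ((exd_B m k x _).mpr het) hAt
  have : top (B m k x) k (A m k x) = top (B m k x) k (top m k x) :=
    (bt_iff hinv1 ((exd_B m k x _).mpr hey) ((exd_B m k x _).mpr het)).mp
      (by rw [hb1y, hb1t])
  rw [this, htt]

lemma top_B_x0 (h : inv_hmap m) (hs : succd m k x) :
    top (B m k x) k (bottom m k x) = x := by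
  have hinv1 : inv_hmap (B m k x) := inv_hmap_B h k x
  have hex : exd m x := succd_exd h k x hs
  have heb : exd m (bottom m k x) := exd_bottom h k x hex
  have hA1b : A_1 (B m k x) k (bottom m k x) = nil :=
    A_1_B_nil h hs _ (A_1_bottom h k hex)
  have hb1b : bottom (B m k x) k (bottom m k x) = bottom m k x :=
    bottom_nopred hinv1 ((exd_B m k x _).mpr heb) hA1b
  have hb1x : bottom (B m k x) k x = bottom m k x := bottom_B_x h hs
  have hAx : A (B m k x) k x = nil := by rw [A_B h k x, if_pos rfl]
  have htx : top (B m k x) k x = x :=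
    top_nosucc hinv1 ((exd_B m k x _).mpr hex) hAx
  have : top (B m k x) k (bottom m k x) = top (B m k x) k x :=
    (bt_iff hinv1 ((exd_B m k x _).mpr heb) ((exd_B m k x _).mpr hex)).mp
      (by rw [hb1b, hb1x])
  rw [this, htx]

end Bfacts

section cFB

variable {m : Fmap} {x : Nat}

lemma one_ne_zero' : Dim.one ≠ Dim.zero := by intro e; cases e

/-- (iii) : cF (B m zero x) x0 = cF m y -/
lemma cF_B_x0 (h : inv_hmap m) (hs : succd m Dim.zero x) :
    cF (B m Dim.zero x) (bottom m Dim.zero x) = cF m (A m Dim.zero x) := by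
  have hinv1 : inv_hmap (B m Dim.zero x) := inv_hmap_B h Dim.zero x
  have hex : exd m x := succd_exd h Dim.zero x hs
  have heb : exd m (bottom m Dim.zero x) := exd_bottom h Dim.zero x hex
  have hey : exd m (A m Dim.zero x) := exd_A h Dim.zero x hs
  show cA_1 (B m Dim.zero x) Dim.one (cA_1 (B m Dim.zero x) Dim.zero (bottom m Dim.zero x)) =
    cA_1 m Dim.one (cA_1 m Dim.zero (A m Dim.zero x))
  have h1 : cA_1 (B m Dim.zero x) Dim.zero (bottom m Dim.zero x) = x := by
    rw [cA_1_eq hinv1 ((exd_B m Dim.zero x _).mpr heb),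
        if_pos (A_1_B_nil h hs _ (A_1_bottom h Dim.zero hex)), top_B_x0 h hs]
  have h2 : cA_1 m Dim.zero (A m Dim.zero x) = x := by
    have hp : A_1 m Dim.zero (A m Dim.zero x) = x := A_1_A h Dim.zero x hs
    rw [cA_1_eq h hey, hp, if_neg (exd_not_nil h x hex)]
  rw [h1, h2, cA_1_B_ne one_ne_zero' x]

/-- (ii) : cF (B m zero x) y = cF m x0 -/
lemma cF_B_y (h : inv_hmap m) (hs : succd m Dim.zero x) :
    cF (B m Dim.zero x) (A m Dim.zero x) = cF m (bottom m Dim.zero x) := by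
  have hinv1 : inv_hmap (B m Dim.zero x) := inv_hmap_B h Dim.zero x
  have hex : exd m x := succd_exd h Dim.zero x hs
  have heb : exd m (bottom m Dim.zero x) := exd_bottom h Dim.zero x hex
  have hey : exd m (A m Dim.zero x) := exd_A h Dim.zero x hs
  show cA_1 (B m Dim.zero x) Dim.one (cA_1 (B m Dim.zero x) Dim.zero (A m Dim.zero x)) =
    cA_1 m Dim.one (cA_1 m Dim.zero (bottom m Dim.zero x))
  have h1 : cA_1 (B m Dim.zero x) Dim.zero (A m Dim.zero x) = top m Dim.zero x := by
    rw [cA_1_eq hinv1 ((exd_B m Dim.zero x _).mpr hey),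
        if_pos (by rw [A_1_B h hs, if_pos rfl]), top_B_y h hs]
  have h2 : cA_1 m Dim.zero (bottom m Dim.zero x) = top m Dim.zero x := by
    rw [cA_1_eq h heb, if_pos (A_1_bottom h Dim.zero hex), top_bottom h Dim.zero hex]
  rw [h1, h2, cA_1_B_ne one_ne_zero' x]

/-- (i) : cF (B m zero x) z = cF m z away from y and x0 -/
lemma cF_B_other (h : inv_hmap m) (hs : succd m Dim.zero x) {z : Nat} (hz : exd m z)
    (hzy : z ≠ A m Dim.zero x) (hzb : z ≠ bottom m Dim.zero x) :
    cF (B m Dim.zero x) z = cF m z := by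
  have hinv1 : inv_hmap (B m Dim.zero x) := inv_hmap_B h Dim.zero x
  show cA_1 (B m Dim.zero x) Dim.one (cA_1 (B m Dim.zero x) Dim.zero z) =
    cA_1 m Dim.one (cA_1 m Dim.zero z)
  have hA1 : A_1 (B m Dim.zero x) Dim.zero z = A_1 m Dim.zero z := by
    rw [A_1_B h hs, if_neg hzy]
  have h1 : cA_1 (B m Dim.zero x) Dim.zero z = cA_1 m Dim.zero z := by
    by_cases hp : A_1 m Dim.zero z = nil
    · rw [cA_1_eq hinv1 ((exd_B m Dim.zero x _).mpr hz), hA1, if_pos hp,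
          cA_1_eq h hz, if_pos hp]
      exact top_B_out_nopred h hs hz hp hzb
    · rw [cA_1_eq hinv1 ((exd_B m Dim.zero x _).mpr hz), hA1, if_neg hp,
          cA_1_eq h hz, if_neg hp]
  rw [h1, cA_1_B_ne one_ne_zero' x]

end cFB

end Fmap
namespace Fmap

section genSwap

variable {f g : ℕ → ℕ} {P : ℕ → Prop} {a b : ℕ}

lemma reach_step {z w : ℕ} (hr : ∃ i, f^[i] z = w) : ∃ i, f^[i] z = f w := by
  obtain ⟨i, hi⟩ := hr
  exact ⟨i + 1, by rw [Function.iterate_succ_apply', hi]⟩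

lemma reach_comp {z w u : ℕ} (h1 : ∃ i, f^[i] z = w) (h2 : ∃ i, f^[i] w = u) :
    ∃ i, f^[i] z = u := by
  obtain ⟨i, hi⟩ := h1
  obtain ⟨j, hj⟩ := h2
  exact ⟨j + i, by rw [Function.iterate_add_apply, hi, hj]⟩

lemma gen_swap
    (hfin : ∃ s : Finset ℕ, ∀ z, P z → z ∈ s)
    (hfP : ∀ w, P w → P (f w))
    (hfinj : ∀ z t, P z → P t → f z = f t → z = t)
    (hPa : P a) (hPb : P b)
    (hga : g a = f b) (hgb : g b = f a)
    (hgo : ∀ w, P w → w ≠ a → w ≠ b → g w = f w) :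
    ∀ n z, P z →
      (∃ i, f^[i] z = g^[n] z) ∨
      ((∃ i, f^[i] a = z) ∧ (∃ i, f^[i] b = g^[n] z)) ∨
      ((∃ i, f^[i] b = z) ∧ (∃ i, f^[i] a = g^[n] z)) := by
  have hgP : ∀ w, P w → P (g w) := by
    intro w hw
    by_cases hwa : w = a
    · rw [hwa, hga]; exact hfP b hPb
    · by_cases hwb : w = b
      · rw [hwb, hgb]; exact hfP a hPa
      · rw [hgo w hw hwa hwb]; exact hfP w hw
  have hsym : ∀ {u v : ℕ}, P u → (∃ i, f^[i] u = v) → ∃ i, f^[i] v = u :=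
    fun hu hr => reach_symm hfin hfP hfinj hu hr
  have hRP : ∀ {u v : ℕ}, P u → (∃ i, f^[i] u = v) → P v := by
    rintro u v hu ⟨i, rfl⟩
    exact iter_pres hfP i u hu
  intro n
  induction n with
  | zero => intro z hz; exact Or.inl ⟨0, rfl⟩
  | succ n ih =>
      intro z hz
      have hPw : P (g^[n] z) := iter_pres hgP n z hz
      have hstep : g^[n+1] z = g (g^[n] z) := Function.iterate_succ_apply' g n z
      set w := g^[n] z with hw
      by_cases hwa : w = a
      case pos =>
        rw [hstep, hwa, hga]
        rcases ih z hz with h1 | ⟨h1, h2⟩ | ⟨h1, h2⟩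
        · -- f-reach z a
          right; left
          exact ⟨hsym hz (hwa ▸ h1), ⟨1, by simp⟩⟩
        · -- R a z ∧ R b a
          left
          have hzb : ∃ i, f^[i] z = b := by
            refine reach_comp (hsym hPa h1) (hsym hPb ?_)
            rw [← hwa]; exact h2
          exact reach_step hzb
        · -- R b z ∧ R a a
          left
          exact reach_step (hsym hPb h1)
      case neg =>
        by_cases hwb : w = b
        case pos =>
          rw [hstep, hwb, hgb]
          rcases ih z hz with h1 | ⟨h1, h2⟩ | ⟨h1, h2⟩
          · right; right
            exact ⟨hsym hz (hwb ▸ h1), ⟨1, by simp⟩⟩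
          · left
            exact reach_step (hsym hPa h1)
          · left
            have hza : ∃ i, f^[i] z = a := by
              refine reach_comp (hsym hPb h1) (hsym hPa ?_)
              rw [← hwb]; exact h2
            exact reach_step hza
        case neg =>
          rw [hstep, hgo w hPw hwa hwb]
          rcases ih z hz with h1 | ⟨h1, h2⟩ | ⟨h1, h2⟩
          · left; exact reach_step h1
          · right; left; exact ⟨h1, reach_step h2⟩
          · right; right; exact ⟨h1, reach_step h2⟩

end genSwap

section faceMerge

variable {m : Fmap} {x : Nat}

lemma exd_m_cF_B (h : inv_hmap m) {w : Nat} (hw : exd m w) :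
    exd m (cF (B m Dim.zero x) w) :=
  (exd_B m Dim.zero x _).mp (exd_cF (inv_hmap_B h Dim.zero x)
    ((exd_B m Dim.zero x w).mpr hw))

lemma cF_B_inj_m (h : inv_hmap m) :
    ∀ z t, exd m z → exd m t → cF (B m Dim.zero x) z = cF (B m Dim.zero x) t → z = t :=
  fun z t hz ht e => cF_inj (inv_hmap_B h Dim.zero x)
    z t ((exd_B m Dim.zero x z).mpr hz) ((exd_B m Dim.zero x t).mpr ht) e

/-- The bridge : after the break, x0 and y are in the same face. -/
lemma expf_B_x0_y (h : inv_hmap m) (hs : succd m Dim.zero x)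
    (hx : ¬ expf m (A m Dim.zero x) (bottom m Dim.zero x)) :
    expf (B m Dim.zero x) (bottom m Dim.zero x) (A m Dim.zero x) := by
  have hex : exd m x := succd_exd h Dim.zero x hs
  have hey : exd m (A m Dim.zero x) := exd_A h Dim.zero x hs
  have heb : exd m (bottom m Dim.zero x) := exd_bottom h Dim.zero x hex
  have hrev : ∃ n, (cF m)^[n] (cF m (A m Dim.zero x)) = A m Dim.zero x := by
    apply reach_symm (exd_finite m) (fun w hw => exd_cF h hw) (cF_inj h) hey
    exact ⟨1, rfl⟩
  classical
  set Q : ℕ → Prop := fun n => (cF m)^[n] (cF m (A m Dim.zero x)) = A m Dim.zero x with hQ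
  have hn := Nat.find_spec hrev
  have hmin := fun i (hi : i < Nat.find hrev) => Nat.find_min hrev hi
  set n := Nat.find hrev with hns
  have hagree : ∀ i, i < n → cF (B m Dim.zero x) ((cF m)^[i] (cF m (A m Dim.zero x)))
      = cF m ((cF m)^[i] (cF m (A m Dim.zero x))) := by
    intro i hi
    set w := (cF m)^[i] (cF m (A m Dim.zero x)) with hwdef
    have hPw : exd m w := iter_pres (fun u hu => exd_cF h hu) i _ (exd_cF h hey)
    have hwy : w ≠ A m Dim.zero x := hmin i hi
    have hwx0 : w ≠ bottom m Dim.zero x := by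
      intro e
      apply hx
      refine ⟨hey, i + 1, ?_⟩
      rw [Function.iterate_succ_apply, ← hwdef, e]
    exact cF_B_other h hs hPw hwy hwx0
  have hiter : (cF (B m Dim.zero x))^[n] (cF m (A m Dim.zero x)) = A m Dim.zero x := by
    rw [iter_eq_of_agree_upto hagree]
    exact hn
  refine ⟨(exd_B m Dim.zero x _).mpr heb, n + 1, ?_⟩
  rw [Function.iterate_succ_apply, cF_B_x0 h hs, hiter]

/-- Breaking merges : expf is preserved from m to B m zero x. -/
lemma expf_B_of_expf (h : inv_hmap m) (hs : succd m Dim.zero x)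
    (hx : ¬ expf m (A m Dim.zero x) (bottom m Dim.zero x)) {z t : Nat}
    (he : expf m z t) : expf (B m Dim.zero x) z t := by
  have hinv1 : inv_hmap (B m Dim.zero x) := inv_hmap_B h Dim.zero x
  have hex : exd m x := succd_exd h Dim.zero x hs
  have hey : exd m (A m Dim.zero x) := exd_A h Dim.zero x hs
  have heb : exd m (bottom m Dim.zero x) := exd_bottom h Dim.zero x hex
  obtain ⟨hz, n, hn⟩ := he
  have key := gen_swap (f := cF (B m Dim.zero x)) (g := cF m) (P := exd m)
    (a := A m Dim.zero x) (b := bottom m Dim.zero x)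
    (exd_finite m) (fun w hw => exd_m_cF_B h hw) (cF_B_inj_m h) hey heb
    (cF_B_x0 h hs).symm (cF_B_y h hs).symm
    (fun w hw hwa hwb => (cF_B_other h hs hw hwa hwb).symm) n z hz
  rw [hn] at key
  have hzB : exd (B m Dim.zero x) z := (exd_B m Dim.zero x z).mpr hz
  have hbridge : expf (B m Dim.zero x) (bottom m Dim.zero x) (A m Dim.zero x) :=
    expf_B_x0_y h hs hx
  rcases key with h1 | ⟨h1, h2⟩ | ⟨h1, h2⟩
  · exact ⟨hzB, h1⟩
  · -- y reaches z, x0 reaches t (in m1)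
    have e1 : expf (B m Dim.zero x) (A m Dim.zero x) z :=
      ⟨(exd_B m Dim.zero x _).mpr hey, h1⟩
    have e2 : expf (B m Dim.zero x) (bottom m Dim.zero x) t :=
      ⟨(exd_B m Dim.zero x _).mpr heb, h2⟩
    exact expf_trans hinv1 (expf_trans hinv1 (expf_symm hinv1 e1)
      (expf_symm hinv1 hbridge)) e2
  · have e1 : expf (B m Dim.zero x) (bottom m Dim.zero x) z :=
      ⟨(exd_B m Dim.zero x _).mpr heb, h1⟩
    have e2 : expf (B m Dim.zero x) (A m Dim.zero x) t :=
      ⟨(exd_B m Dim.zero x _).mpr hey, h2⟩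
    exact expf_trans hinv1 (expf_trans hinv1 (expf_symm hinv1 e1) hbridge) e2

/-- Characterization of faces after the break. -/
lemma expf_of_expf_B (h : inv_hmap m) (hs : succd m Dim.zero x) {z t : Nat}
    (he : expf (B m Dim.zero x) z t) :
    expf m z t ∨ (expf m (A m Dim.zero x) z ∧ expf m (bottom m Dim.zero x) t) ∨
      (expf m (bottom m Dim.zero x) z ∧ expf m (A m Dim.zero x) t) := by
  have hex : exd m x := succd_exd h Dim.zero x hs
  have hey : exd m (A m Dim.zero x) := exd_A h Dim.zero x hs
  have heb : exd m (bottom m Dim.zero x) := exd_bottom h Dim.zero x hex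
  obtain ⟨hz1, n, hn⟩ := he
  have hz : exd m z := (exd_B m Dim.zero x z).mp hz1
  have key := gen_swap (f := cF m) (g := cF (B m Dim.zero x)) (P := exd m)
    (a := A m Dim.zero x) (b := bottom m Dim.zero x)
    (exd_finite m) (fun w hw => exd_cF h hw) (cF_inj h) hey heb
    (cF_B_y h hs) (cF_B_x0 h hs)
    (fun w hw hwa hwb => cF_B_other h hs hw hwa hwb) n z hz
  rw [hn] at key
  rcases key with h1 | ⟨h1, h2⟩ | ⟨h1, h2⟩
  · exact Or.inl ⟨hz, h1⟩
  · exact Or.inr (Or.inl ⟨⟨hey, h1⟩, ⟨heb, h2⟩⟩)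
  · exact Or.inr (Or.inr ⟨⟨heb, h1⟩, ⟨hey, h2⟩⟩)

end faceMerge

end Fmap
namespace Fmap

/-- The dart on the "far" side used as source in adjacency. -/
def srcD (m : Fmap) (p : Nat × Bool) : Nat :=
  if p.2 then bottom m Dim.zero p.1 else A m Dim.zero p.1

/-- The dart coding the face (destination side). -/
def dstD (m : Fmap) (p : Nat × Bool) : Nat :=
  if p.2 then A m Dim.zero p.1 else bottom m Dim.zero p.1

lemma faceDart_eq_dstD (m : Fmap) (p : Nat × Bool) : faceDart m p = dstD m p := by
  rcases p with ⟨xp, bp⟩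
  cases bp <;> rfl

lemma adjacent_faces_iff (m : Fmap) (p q : Nat × Bool) :
    adjacent_faces m p q ↔ expf m (srcD m p) (dstD m q) := by
  rcases p with ⟨xp, bp⟩
  rcases q with ⟨xq, bq⟩
  cases bp <;> cases bq <;> simp [adjacent_faces, srcD, dstD]

section assemble

variable {m : Fmap} {x : Nat}

/-- Goodness of a ring element relative to the broken dart. -/
def goodE (m : Fmap) (x : Nat) (p : Nat × Bool) : Prop :=
  succd m Dim.zero p.1 ∧ ¬ expe m x p.1

lemma goodE_facts (h : inv_hmap m) (hs : succd m Dim.zero x) {p : Nat × Bool}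
    (hg : goodE m x p) :
    exd m p.1 ∧ p.1 ≠ x ∧ A (B m Dim.zero x) Dim.zero p.1 = A m Dim.zero p.1 ∧
      bottom (B m Dim.zero x) Dim.zero p.1 = bottom m Dim.zero p.1 := by
  have hex : exd m x := succd_exd h Dim.zero x hs
  have hep : exd m p.1 := succd_exd h Dim.zero p.1 hg.1
  have hpx : p.1 ≠ x := by
    intro e
    exact hg.2 (by rw [e]; exact expe_refl hex)
  have hbne : bottom m Dim.zero p.1 ≠ bottom m Dim.zero x := by
    intro e
    exact hg.2 (expe_of_bottom_eq h hex hep e.symm)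
  refine ⟨hep, hpx, ?_, bottom_B_out h hs hep hbne⟩
  rw [A_B h Dim.zero x, if_neg hpx]

lemma srcD_B (h : inv_hmap m) (hs : succd m Dim.zero x) {p : Nat × Bool}
    (hg : goodE m x p) : srcD (B m Dim.zero x) p = srcD m p := by
  obtain ⟨_, _, hA, hB⟩ := goodE_facts h hs hg
  unfold srcD
  cases hb : p.2 <;> simp [hA, hB]

lemma dstD_B (h : inv_hmap m) (hs : succd m Dim.zero x) {p : Nat × Bool}
    (hg : goodE m x p) : dstD (B m Dim.zero x) p = dstD m p := by
  obtain ⟨_, _, hA, hB⟩ := goodE_facts h hs hg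
  unfold dstD
  cases hb : p.2 <;> simp [hA, hB]

lemma exd_dstD (h : inv_hmap m) {p : Nat × Bool} (hp : succd m Dim.zero p.1) :
    exd m (dstD m p) := by
  unfold dstD
  cases p.2
  · simp only [Bool.false_eq_true, if_neg]
    exact exd_bottom h Dim.zero p.1 (succd_exd h Dim.zero p.1 hp)
  · simp only [if_pos]
    exact exd_A h Dim.zero p.1 hp

lemma exd_srcD (h : inv_hmap m) {p : Nat × Bool} (hp : succd m Dim.zero p.1) :
    exd m (srcD m p) := by
  unfold srcD
  cases p.2
  · simp only [Bool.false_eq_true, if_neg]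
    exact exd_A h Dim.zero p.1 hp
  · simp only [if_pos]
    exact exd_bottom h Dim.zero p.1 (succd_exd h Dim.zero p.1 hp)

lemma del_mem {l : List (Nat × Bool)} {z : Nat} (hd : distinct_edge_list m z l) :
    ∀ p ∈ l, ¬ expe m z p.1 := by
  induction l with
  | nil => intro p hp; cases hp
  | cons q l' ih =>
      rcases q with ⟨xq, bq⟩
      intro p hp
      rcases List.mem_cons.mp hp with rfl | hp
      · exact hd.2
      · exact ih hd.1 p hp

lemma r0_mem {l : List (Nat × Bool)} (h0 : pre_ring0 m l) :
    ∀ p ∈ l, succd m Dim.zero p.1 := by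
  induction l with
  | nil => intro p hp; cases hp
  | cons q l' ih =>
      rcases q with ⟨xq, bq⟩
      intro p hp
      rcases List.mem_cons.mp hp with rfl | hp
      · exact h0.2.2
      · exact ih h0.1 p hp

lemma goodE_mem {l : List (Nat × Bool)} (h0 : pre_ring0 m l)
    (hd : distinct_edge_list m x l) : ∀ p ∈ l, goodE m x p :=
  fun p hp => ⟨r0_mem h0 p hp, del_mem hd p hp⟩

lemma lastd_mem {l : List (Nat × Bool)} (hl : l ≠ []) : lastd l ∈ l := by
  induction l with
  | nil => exact absurd rfl hl
  | cons q l' ih =>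
      cases l' with
      | nil => exact List.mem_singleton.mpr rfl
      | cons q' l'' =>
          have : lastd (q :: q' :: l'') = lastd (q' :: l'') := rfl
          rw [this]
          exact List.mem_cons_of_mem q (ih (by simp))

lemma dfl_mem {l : List (Nat × Bool)} {p : Nat × Bool}
    (hd : distinct_face_list m p l) : ∀ q ∈ l, ¬ expf m (faceDart m p) (faceDart m q) := by
  induction l with
  | nil => intro q hq; cases hq
  | cons r l' ih =>
      intro q hq
      rcases List.mem_cons.mp hq with rfl | hq
      · exact hd.2
      · exact ih hd.1 q hq

/-- edge distinctness is preserved. -/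
lemma expe_B_of_good (h : inv_hmap m) (hs : succd m Dim.zero x) {z t : Nat}
    (hgz : succd m Dim.zero z) (hgt : succd m Dim.zero t)
    (hnez : ¬ expe m x z) (hnet : ¬ expe m x t)
    (he : expe (B m Dim.zero x) z t) : expe m z t := by
  have hinv1 : inv_hmap (B m Dim.zero x) := inv_hmap_B h Dim.zero x
  have hex : exd m x := succd_exd h Dim.zero x hs
  have hez : exd m z := succd_exd h Dim.zero z hgz
  have het : exd m t := succd_exd h Dim.zero t hgt
  have hbz : bottom m Dim.zero z ≠ bottom m Dim.zero x :=
    fun e => hnez (expe_of_bottom_eq h hex hez e.symm)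
  have hbt : bottom m Dim.zero t ≠ bottom m Dim.zero x :=
    fun e => hnet (expe_of_bottom_eq h hex het e.symm)
  have h1 := expe_bottom_eq hinv1 he
  rw [bottom_B_out h hs hez hbz, bottom_B_out h hs het hbt] at h1
  exact expe_of_bottom_eq h hez het h1

lemma pre_ring0_B_aux (h : inv_hmap m) (hs : succd m Dim.zero x) :
    ∀ l : List (Nat × Bool), pre_ring0 m l → distinct_edge_list m x l →
      pre_ring0 (B m Dim.zero x) l := by
  intro l
  induction l with
  | nil => intro _ _; exact trivial
  | cons q l' ih =>
      rcases q with ⟨xq, bq⟩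
      intro h0 hd
      refine ⟨ih h0.1 hd.1, ?_, ?_⟩
      · -- distinct_edge_list in B
        clear ih
        have hq : succd m Dim.zero xq := h0.2.2
        have hqx : ¬ expe m x xq := hd.2
        have hmem0 := r0_mem h0.1
        have hmemd := del_mem hd.1
        have hmeme := del_mem (l := l') (z := xq) h0.2.1
        clear h0 hd
        induction l' with
        | nil => exact trivial
        | cons r l'' ih' =>
            rcases r with ⟨xr, br⟩
            refine ⟨ih' (fun p hp => hmem0 p (List.mem_cons_of_mem _ hp))
              (fun p hp => hmemd p (List.mem_cons_of_mem _ hp))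
              (fun p hp => hmeme p (List.mem_cons_of_mem _ hp)), ?_⟩
            intro hcon
            exact hmeme (xr, br) (List.mem_cons_self)
              (expe_B_of_good h hs hq (hmem0 (xr, br) (List.mem_cons_self))
                hqx (hmemd (xr, br) (List.mem_cons_self)) hcon)
      · -- succd in B
        show A (B m Dim.zero x) Dim.zero xq ≠ nil
        have hg : goodE m x (xq, bq) := ⟨h0.2.2, hd.2⟩
        rw [(goodE_facts h hs hg).2.2.1]
        exact h0.2.2

end assemble

end Fmap
namespace Fmap

section assemble2

variable {m : Fmap} {x : Nat}

lemma dfl_of_mem {M : Fmap} {p : Nat × Bool} :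
    ∀ {l : List (Nat × Bool)}, (∀ q ∈ l, ¬ expf M (faceDart M p) (faceDart M q)) →
      distinct_face_list M p l := by
  intro l
  induction l with
  | nil => intro _; exact trivial
  | cons q l' ih =>
      intro hmem
      exact ⟨ih (fun r hr => hmem r (List.mem_cons_of_mem _ hr)),
        hmem q (List.mem_cons_self)⟩

lemma adjacent_faces_B (h : inv_hmap m) (hs : succd m Dim.zero x)
    (hx : ¬ expf m (A m Dim.zero x) (bottom m Dim.zero x)) {p q : Nat × Bool}
    (hgp : goodE m x p) (hgq : goodE m x q)
    (ha : adjacent_faces m p q) : adjacent_faces (B m Dim.zero x) p q := by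
  rw [adjacent_faces_iff] at ha ⊢
  rw [srcD_B h hs hgp, dstD_B h hs hgq]
  exact expf_B_of_expf h hs hx ha

lemma pre_ring1_B_aux (h : inv_hmap m) (hs : succd m Dim.zero x)
    (hx : ¬ expf m (A m Dim.zero x) (bottom m Dim.zero x)) :
    ∀ l : List (Nat × Bool), pre_ring1 m l → pre_ring0 m l →
      distinct_edge_list m x l → pre_ring1 (B m Dim.zero x) l := by
  intro l
  induction l with
  | nil => intro _ _ _; exact trivial
  | cons q l' ih =>
      intro hr1 hr0 hdel
      refine ⟨ih hr1.1 hr0.1 hdel.1, ?_⟩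
      cases l' with
      | nil => exact trivial
      | cons r l'' =>
          have hgq : goodE m x q := goodE_mem hr0 hdel q (List.mem_cons_self)
          have hgr : goodE m x r :=
            goodE_mem hr0 hdel r (List.mem_cons_of_mem _ (List.mem_cons_self))
          exact adjacent_faces_B h hs hx hgq hgr hr1.2

lemma pre_ring3_B_aux (h : inv_hmap m) (hs : succd m Dim.zero x)
    (hx : ¬ expf m (A m Dim.zero x) (bottom m Dim.zero x)) {b : Bool} :
    ∀ l : List (Nat × Bool), pre_ring0 m l → distinct_edge_list m x l →
      pre_ring3 m l → distinct_face_list m (x, b) l →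
      pre_ring3 (B m Dim.zero x) l := by
  intro l
  induction l with
  | nil => intro _ _ _ _; exact trivial
  | cons q l' ih =>
      intro hr0 hdel hr3 hdf
      refine ⟨ih hr0.1 hdel.1 hr3.1 hdf.1, ?_⟩
      apply dfl_of_mem
      intro r hr hcon
      have hgq : goodE m x q := goodE_mem hr0 hdel q (List.mem_cons_self)
      have hgr : goodE m x r := goodE_mem hr0 hdel r (List.mem_cons_of_mem _ hr)
      rw [faceDart_eq_dstD, faceDart_eq_dstD, dstD_B h hs hgq, dstD_B h hs hgr] at hcon
      have hqr : ¬ expf m (dstD m q) (dstD m r) := by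
        have := dfl_mem hr3.2 r hr
        rwa [faceDart_eq_dstD, faceDart_eq_dstD] at this
      have hbq : ¬ expf m (dstD m (x, b)) (dstD m q) := by
        have := hdf.2
        unfold distinct_faces at this
        rwa [faceDart_eq_dstD, faceDart_eq_dstD] at this
      have hbr : ¬ expf m (dstD m (x, b)) (dstD m r) := by
        have := dfl_mem hdf.1 r hr
        rwa [faceDart_eq_dstD, faceDart_eq_dstD] at this
      have hdst : dstD m (x, b) = A m Dim.zero x ∨ dstD m (x, b) = bottom m Dim.zero x := by
        cases b <;> simp [dstD]
      rcases expf_of_expf_B h hs hcon with h1 | ⟨hc1, hc2⟩ | ⟨hc1, hc2⟩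
      · exact hqr h1
      · rcases hdst with e | e
        · exact hbq (e ▸ hc1)
        · -- dst (x,b) = x0 ; but cross says x0 ~ dst r
          exact hbr (e ▸ hc2)
      · rcases hdst with e | e
        · exact hbr (e ▸ hc2)
        · exact hbq (e ▸ hc1)

lemma bridge_all (h : inv_hmap m) (hs : succd m Dim.zero x)
    (hx : ¬ expf m (A m Dim.zero x) (bottom m Dim.zero x)) {u v : Nat}
    (hu : u = A m Dim.zero x ∨ u = bottom m Dim.zero x)
    (hv : v = A m Dim.zero x ∨ v = bottom m Dim.zero x) :
    expf (B m Dim.zero x) u v := by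
  have hinv1 : inv_hmap (B m Dim.zero x) := inv_hmap_B h Dim.zero x
  have hex : exd m x := succd_exd h Dim.zero x hs
  have hey : exd (B m Dim.zero x) (A m Dim.zero x) :=
    (exd_B m Dim.zero x _).mpr (exd_A h Dim.zero x hs)
  have heb : exd (B m Dim.zero x) (bottom m Dim.zero x) :=
    (exd_B m Dim.zero x _).mpr (exd_bottom h Dim.zero x hex)
  have hb := expf_B_x0_y h hs hx
  rcases hu with rfl | rfl <;> rcases hv with rfl | rfl
  · exact expf_refl hey
  · exact expf_symm hinv1 hb
  · exact hb
  · exact expf_refl heb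

end assemble2

end Fmap
open Fmap
/-- The four ring conditions are preserved by the first break. -/
theorem pre_ring_B (m : Fmap) (x : Nat) (b : Bool) (l0 : List (Nat × Bool))
    (h1 : inv_hmap m) (h2 : planar m)
    (hx : ¬ expf m (A m Dim.zero x) (bottom m Dim.zero x))
    (hr : ring m ((x, b) :: l0)) :
    pre_ring0 (B m Dim.zero x) l0 ∧ pre_ring1 (B m Dim.zero x) l0 ∧
    pre_ring2 (B m Dim.zero x) l0 ∧ pre_ring3 (B m Dim.zero x) l0 := by
  obtain ⟨hne, h0, h1r, h2r, h3r⟩ := hr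
  have hs : succd m Dim.zero x := h0.2.2
  have hdel : distinct_edge_list m x l0 := h0.2.1
  have h0l : pre_ring0 m l0 := h0.1
  have hinv1 : inv_hmap (B m Dim.zero x) := inv_hmap_B h1 Dim.zero x
  refine ⟨pre_ring0_B_aux h1 hs l0 h0l hdel,
    pre_ring1_B_aux h1 hs hx l0 h1r.1 h0l hdel, ?_,
    pre_ring3_B_aux h1 hs hx l0 h0l hdel h3r.1 h3r.2⟩
  -- pre_ring2
  cases l0 with
  | nil => exact trivial
  | cons q l1 =>
      rcases q with ⟨x1, b1⟩
      have hg1 : goodE m x (x1, b1) := goodE_mem h0l hdel _ (List.mem_cons_self)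
      have hsrc1 : srcD m (x1, b1) = A m Dim.zero x1 ∨
          srcD m (x1, b1) = bottom m Dim.zero x1 := by
        cases b1 <;> simp [srcD]
      have hsxb : srcD m (x, b) = A m Dim.zero x ∨ srcD m (x, b) = bottom m Dim.zero x := by
        cases b <;> simp [srcD]
      have hdxb : dstD m (x, b) = A m Dim.zero x ∨ dstD m (x, b) = bottom m Dim.zero x := by
        cases b <;> simp [dstD]
      cases l1 with
      | nil =>
          -- singleton ring after the head
          have ha1 : adjacent_faces m (x, b) (x1, b1) := h1r.2
          have ha2 : adjacent_faces m (x1, b1) (x, b) := h2r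
          rw [adjacent_faces_iff] at ha1 ha2
          show expf (B m Dim.zero x) (A (B m Dim.zero x) Dim.zero x1)
            (bottom (B m Dim.zero x) Dim.zero x1)
          obtain ⟨_, _, htA, htB⟩ := goodE_facts h1 hs hg1
          rw [htA, htB]
          -- transfer the two adjacency facts
          have e1 : expf (B m Dim.zero x) (srcD m (x, b)) (dstD m (x1, b1)) :=
            expf_B_of_expf h1 hs hx ha1
          have e2 : expf (B m Dim.zero x) (srcD m (x1, b1)) (dstD m (x, b)) :=
            expf_B_of_expf h1 hs hx ha2
          have hbridge : expf (B m Dim.zero x) (dstD m (x, b)) (srcD m (x, b)) :=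
            bridge_all h1 hs hx hdxb hsxb
          have echain : expf (B m Dim.zero x) (srcD m (x1, b1)) (dstD m (x1, b1)) :=
            expf_trans hinv1 (expf_trans hinv1 e2 hbridge) e1
          cases hb1 : b1
          · -- b1 = false : src = A x1, dst = bottom x1
            have hsrc : srcD m (x1, b1) = A m Dim.zero x1 := by rw [hb1]; simp [srcD]
            have hdst : dstD m (x1, b1) = bottom m Dim.zero x1 := by rw [hb1]; simp [dstD]
            rw [hsrc, hdst] at echain
            exact echain
          · -- b1 = true : dst = A x1, src = bottom x1
            have hsrc : srcD m (x1, b1) = bottom m Dim.zero x1 := by rw [hb1]; simp [srcD]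
            have hdst : dstD m (x1, b1) = A m Dim.zero x1 := by rw [hb1]; simp [dstD]
            rw [hsrc, hdst] at echain
            exact expf_symm hinv1 echain
      | cons q2 l2 =>
          show adjacent_faces (B m Dim.zero x) (lastd (q2 :: l2)) (x1, b1)
          have hlmem : lastd (q2 :: l2) ∈ (x1, b1) :: q2 :: l2 :=
            List.mem_cons_of_mem _ (lastd_mem (by simp))
          have hgl : goodE m x (lastd (q2 :: l2)) := goodE_mem h0l hdel _ hlmem
          have ha2 : adjacent_faces m (lastd (q2 :: l2)) (x, b) := h2r
          have ha1 : adjacent_faces m (x, b) (x1, b1) := h1r.2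
          rw [adjacent_faces_iff] at ha1 ha2
          rw [adjacent_faces_iff, srcD_B h1 hs hgl, dstD_B h1 hs hg1]
          have e2 : expf (B m Dim.zero x) (srcD m (lastd (q2 :: l2))) (dstD m (x, b)) :=
            expf_B_of_expf h1 hs hx ha2
          have e1 : expf (B m Dim.zero x) (srcD m (x, b)) (dstD m (x1, b1)) :=
            expf_B_of_expf h1 hs hx ha1
          have hbridge : expf (B m Dim.zero x) (dstD m (x, b)) (srcD m (x, b)) :=
            bridge_all h1 hs hx hdxb hsxb
          exact expf_trans hinv1 (expf_trans hinv1 e2 hbridge) e1
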